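/- arXiv:1502.02173 — 8 statements merged into one kernel-verified Lean document; each statement's English description precedes it below -/
import Mathlib

section
/- For all real numbers x, y with 0 ≤ y ≤ x ≤ 1, one has x² + y² + 2x ≥ √2·(x^{4/3} + y^{4/3})^{3/2}. -/
open scoped NNReal

lemma aux_pow (a b : ℝ) (ha : 0 ≤ a) (hb : 0 ≤ b) :
    (a + b) ^ ((3:ℝ)/2) ≤ Real.sqrt 2 * (a ^ ((3:ℝ)/2) + b ^ ((3:ℝ)/2)) := by
  lift a to ℝ≥0 using ha
  lift b to ℝ≥0 using hb
  have h := NNReal.rpow_add_le_mul_rpow_add_rpow a b (p := (3:ℝ)/2) (by norm_num)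
  have h2 : ((2:ℝ≥0) : ℝ) ^ ((3:ℝ)/2 - 1) = Real.sqrt 2 := by
    rw [Real.sqrt_eq_rpow]
    norm_num
  calc ((a:ℝ) + b) ^ ((3:ℝ)/2) = (((a + b : ℝ≥0) : ℝ)) ^ ((3:ℝ)/2) := by push_cast; ring_nf
    _ = (((a+b) ^ ((3:ℝ)/2) : ℝ≥0) : ℝ) := by rw [NNReal.coe_rpow]
    _ ≤ (((2:ℝ≥0) ^ ((3:ℝ)/2 - 1) * (a ^ ((3:ℝ)/2) + b ^ ((3:ℝ)/2)) : ℝ≥0) : ℝ) := by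
        exact_mod_cast h
    _ = Real.sqrt 2 * ((a:ℝ) ^ ((3:ℝ)/2) + (b:ℝ) ^ ((3:ℝ)/2)) := by
        push_cast [NNReal.coe_rpow]
        rw [← h2]
        norm_num

theorem stmt0 (x y : ℝ) (hy : 0 ≤ y) (hyx : y ≤ x) (hx : x ≤ 1) :
    Real.sqrt 2 * (x ^ ((4:ℝ)/3) + y ^ ((4:ℝ)/3)) ^ ((3:ℝ)/2) ≤ x^2 + y^2 + 2*x := by
  have hx0 : 0 ≤ x := hy.trans hyx
  have ha : (0:ℝ) ≤ x ^ ((4:ℝ)/3) := Real.rpow_nonneg hx0 _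
  have hb : (0:ℝ) ≤ y ^ ((4:ℝ)/3) := Real.rpow_nonneg hy _
  have hxe : (x ^ ((4:ℝ)/3)) ^ ((3:ℝ)/2) = x ^ 2 := by
    rw [← Real.rpow_natCast x 2, ← Real.rpow_mul hx0]; norm_num
  have hye : (y ^ ((4:ℝ)/3)) ^ ((3:ℝ)/2) = y ^ 2 := by
    rw [← Real.rpow_natCast y 2, ← Real.rpow_mul hy]; norm_num
  have key := aux_pow _ _ ha hb
  rw [hxe, hye] at key
  have h2 : Real.sqrt 2 * (x ^ ((4:ℝ)/3) + y ^ ((4:ℝ)/3)) ^ ((3:ℝ)/2)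
      ≤ Real.sqrt 2 * (Real.sqrt 2 * (x^2 + y^2)) :=
    mul_le_mul_of_nonneg_left key (Real.sqrt_nonneg 2)
  have hs : Real.sqrt 2 * Real.sqrt 2 = 2 := Real.mul_self_sqrt (by norm_num)
  have hx2 : x^2 ≤ x := by nlinarith
  have hy2 : y^2 ≤ x := by nlinarith
  nlinarith [h2, hs]
end

section
/- For every complex polynomial P(z,w) = az² + bzw + cw² with a, b, c ∈ ℂ, there exist real numbers a', b', c' such that sup_{|z|,|w|≤1} |a'z² + b'zw + c'w²| ≤ sup_{|z|,|w|≤1} |az² + bzw + cw²| and (|a'|^{4/3} + |b'|^{4/3} + |c'|^{4/3})^{3/4} = (|a|^{4/3} + |b|^{4/3} + |c|^{4/3})^{3/4}. -/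
set_option maxHeartbeats 1000000

/-- Supremum of `|a z² + b z w + c w²|` over the closed unit bidisk. -/
noncomputable def supBidisk (a b c : ℂ) : ℝ :=
  sSup {r : ℝ | ∃ z w : ℂ, ‖z‖ ≤ 1 ∧ ‖w‖ ≤ 1 ∧
    r = ‖a * z^2 + b * z * w + c * w^2‖}

lemma abs_val_le (a b c z w : ℂ) (hz : ‖z‖ ≤ 1) (hw : ‖w‖ ≤ 1) :
    ‖a * z^2 + b * z * w + c * w^2‖ ≤
      ‖a‖ + ‖b‖ + ‖c‖ := by
  have h1 : ‖a * z^2 + b * z * w + c * w^2‖ ≤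
      ‖a * z^2‖ + ‖b * z * w‖ + ‖c * w^2‖ := by
    calc ‖a * z^2 + b * z * w + c * w^2‖
        ≤ ‖a * z^2 + b * z * w‖ + ‖c * w^2‖ := norm_add_le _ _
      _ ≤ ‖a * z^2‖ + ‖b * z * w‖ + ‖c * w^2‖ := by
          gcongr; exact norm_add_le _ _
  have h2 : ‖a * z^2‖ ≤ ‖a‖ := by
    rw [norm_mul, norm_pow]
    exact mul_le_of_le_one_right (norm_nonneg a) (pow_le_one₀ (norm_nonneg z) hz)
  have h3 : ‖b * z * w‖ ≤ ‖b‖ := by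
    rw [norm_mul, norm_mul]
    calc ‖b‖ * ‖z‖ * ‖w‖
        ≤ ‖b‖ * ‖z‖ :=
          mul_le_of_le_one_right (mul_nonneg (norm_nonneg b) (norm_nonneg z)) hw
      _ ≤ ‖b‖ := mul_le_of_le_one_right (norm_nonneg b) hz
  have h4 : ‖c * w^2‖ ≤ ‖c‖ := by
    rw [norm_mul, norm_pow]
    exact mul_le_of_le_one_right (norm_nonneg c) (pow_le_one₀ (norm_nonneg w) hw)
  linarith

lemma bddAbove_supSet (a b c : ℂ) :
    BddAbove {r : ℝ | ∃ z w : ℂ, ‖z‖ ≤ 1 ∧ ‖w‖ ≤ 1 ∧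
      r = ‖a * z^2 + b * z * w + c * w^2‖} := by
  refine ⟨‖a‖ + ‖b‖ + ‖c‖, ?_⟩
  rintro r ⟨z, w, hz, hw, rfl⟩
  exact abs_val_le a b c z w hz hw

lemma le_supBidisk (a b c : ℂ) {z w : ℂ} (hz : ‖z‖ ≤ 1) (hw : ‖w‖ ≤ 1) :
    ‖a * z^2 + b * z * w + c * w^2‖ ≤ supBidisk a b c :=
  le_csSup (bddAbove_supSet a b c) ⟨z, w, hz, hw, rfl⟩

lemma supBidisk_le (a b c : ℂ) {K : ℝ}
    (h : ∀ z w : ℂ, ‖z‖ ≤ 1 → ‖w‖ ≤ 1 →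
      ‖a * z^2 + b * z * w + c * w^2‖ ≤ K) :
    supBidisk a b c ≤ K := by
  refine csSup_le ⟨‖a * 0^2 + b * 0 * 0 + c * 0^2‖, 0, 0, by simp, by simp, rfl⟩ ?_
  rintro r ⟨z, w, hz, hw, rfl⟩
  exact h z w hz hw

lemma supBidisk_nonneg (a b c : ℂ) : 0 ≤ supBidisk a b c :=
  le_trans (norm_nonneg _) (le_supBidisk a b c (z := 0) (w := 0) (by simp) (by simp))

lemma exists_unit_sq (a : ℂ) : ∃ u : ℂ, ‖u‖ = 1 ∧ u^2 * a = (‖a‖ : ℂ) := by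
  rcases eq_or_ne a 0 with rfl | ha
  · exact ⟨1, by simp, by simp⟩
  · obtain ⟨v, hv⟩ := IsAlgClosed.exists_pow_nat_eq ((‖a‖ : ℂ) / a) zero_lt_two
    have habs : ‖(‖a‖ : ℂ) / a‖ = 1 := by
      rw [norm_div, Complex.norm_of_nonneg (norm_nonneg a)]
      field_simp [norm_ne_zero_iff.mpr ha]
    have hv1 : ‖v‖ = 1 := by
      have : ‖v‖ ^ 2 = 1 := by rw [← norm_pow, hv, habs]
      nlinarith [norm_nonneg v]
    exact ⟨v, hv1, by rw [hv]; field_simp⟩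

lemma maxmod (α β γ : ℂ) {K : ℝ}
    (h : ∀ z w : ℂ, ‖z‖ = 1 → ‖w‖ = 1 →
      ‖α * z^2 + β * z * w + γ * w^2‖ ≤ K) :
    ∀ z w : ℂ, ‖z‖ ≤ 1 → ‖w‖ ≤ 1 →
      ‖α * z^2 + β * z * w + γ * w^2‖ ≤ K := by
  have step1 : ∀ z w : ℂ, ‖z‖ = 1 → ‖w‖ ≤ 1 →
      ‖α * z^2 + β * z * w + γ * w^2‖ ≤ K := by
    intro z w hz hw
    exact Complex.norm_le_of_forall_mem_frontier_norm_le (U := Metric.ball (0:ℂ) 1)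
      Metric.isBounded_ball
      (f := fun w : ℂ => α * z^2 + β * z * w + γ * w^2)
      (Differentiable.diffContOnCl (by fun_prop))
      (fun w' hw' => by
        rw [frontier_ball (0:ℂ) one_ne_zero, mem_sphere_zero_iff_norm] at hw'
        exact h z w' hz hw')
      (by rw [closure_ball (0:ℂ) one_ne_zero, mem_closedBall_zero_iff]; exact hw)
  intro z w hz hw
  exact Complex.norm_le_of_forall_mem_frontier_norm_le (U := Metric.ball (0:ℂ) 1)
    Metric.isBounded_ball
    (f := fun z : ℂ => α * z^2 + β * z * w + γ * w^2)
    (Differentiable.diffContOnCl (by fun_prop))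
    (fun z' hz' => by
      rw [frontier_ball (0:ℂ) one_ne_zero, mem_sphere_zero_iff_norm] at hz'
      exact step1 z' w hz' hw)
    (by rw [closure_ball (0:ℂ) one_ne_zero, mem_closedBall_zero_iff]; exact hz)

lemma core {A C p q r K : ℝ} (hA : 0 ≤ A) (hC : 0 ≤ C) (hr : 0 ≤ r)
    (hr2 : r^2 = p^2 + q^2)
    (H : ∀ x y : ℝ, x^2 + y^2 = 1 →
      ((A+C)*x + p)^2 + ((A-C)*y + q)^2 ≤ K) :
    (A + C + r)^2 ≤ K ∨
      (∀ x y : ℝ, x^2 + y^2 = 1 → ((A-C)*x + r)^2 + (A+C)^2*y^2 ≤ K) := by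
  set D := A + C with hD
  set B := A - C with hB
  have hD0 : 0 ≤ D := by positivity
  have H' : ∀ x y : ℝ, x^2 + y^2 = 1 → (D*x + |p|)^2 + (B*y + |q|)^2 ≤ K := by
    intro x y hxy
    rcases le_or_gt 0 p with hp | hp <;> rcases le_or_gt 0 q with hq | hq
    · have := H x y hxy
      rw [abs_of_nonneg hp, abs_of_nonneg hq]; linarith
    · have := H x (-y) (by rw [neg_sq]; exact hxy)
      rw [abs_of_nonneg hp, abs_of_neg hq]; nlinarith [this]
    · have := H (-x) y (by rw [neg_sq]; exact hxy)
      rw [abs_of_neg hp, abs_of_nonneg hq]; nlinarith [this]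
    · have := H (-x) (-y) (by rw [neg_sq, neg_sq]; exact hxy)
      rw [abs_of_neg hp, abs_of_neg hq]; nlinarith [this]
  by_cases h1 : (D + r)^2 ≤ K
  · exact Or.inl h1
  right
  push_neg at h1
  set p' := |p| with hp'
  set q' := |q| with hq'
  have hp'0 : 0 ≤ p' := abs_nonneg p
  have hq'0 : 0 ≤ q' := abs_nonneg q
  have hpq : p'^2 + q'^2 = r^2 := by
    rw [hp', hq', sq_abs, sq_abs]; linarith
  have hq'pos : 0 < q' := by
    rcases eq_or_lt_of_le hq'0 with h | h
    · exfalso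
      have hpr : p' = r := by nlinarith
      have := H' 1 0 (by norm_num)
      rw [← h] at this
      simp only [mul_one, mul_zero, zero_add] at this
      nlinarith
    · exact h
  have hrpos : 0 < r := by nlinarith
  intro x₂ y₂ hxy2
  have hx₂ : x₂^2 ≤ 1 := by nlinarith [sq_nonneg y₂]
  have hq'r : q'^2 ≤ r^2 := by nlinarith [sq_nonneg p']
  set X := Real.sqrt (r^2 - q'^2 * x₂^2) with hX
  have hXnn : 0 ≤ X := Real.sqrt_nonneg _
  have hnn : 0 ≤ r^2 - q'^2 * x₂^2 := by
    have h5 : q'^2 * x₂^2 ≤ r^2 * 1 :=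
      mul_le_mul hq'r hx₂ (sq_nonneg x₂) (sq_nonneg r)
    linarith
  have hX2 : X^2 = r^2 - q'^2 * x₂^2 := by
    rw [hX, Real.sq_sqrt hnn]
  have hXp : p' ≤ X := by
    have h2 : p'^2 ≤ X^2 := by nlinarith
    nlinarith
  have hpoint : (X/r)^2 + (q'*x₂/r)^2 = 1 := by
    field_simp
    nlinarith
  have hmain := H' (X/r) (q'*x₂/r) hpoint
  have hmul : (D*X + p'*r)^2 + q'^2*(B*x₂ + r)^2 ≤ r^2 * K := by
    have e1 : (D*(X/r) + p')^2 + (B*(q'*x₂/r) + q')^2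
        = ((D*X + p'*r)^2 + q'^2*(B*x₂ + r)^2) / r^2 := by
      field_simp
    rw [e1] at hmain
    rw [div_le_iff₀ (by positivity)] at hmain
    linarith [hmain]
  have e3 : D^2*X^2 = D^2*p'^2 + D^2*q'^2*y₂^2 := by
    rw [hX2]
    linear_combination (-(D^2))*hpq + (-(D^2*q'^2))*hxy2
  have e4 : D*p'*(p'*r) ≤ D*X*(p'*r) :=
    mul_le_mul_of_nonneg_right (mul_le_mul_of_nonneg_left hXp hD0) (by positivity)
  have key' : p'^2*(D+r)^2 + q'^2*(D^2*y₂^2) ≤ (D*X + p'*r)^2 := by nlinarith [e3, e4]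
  have key : p'^2*(D+r)^2 + q'^2*(B*x₂+r)^2 + q'^2*(D^2*y₂^2) ≤ r^2 * K := by
    linarith [hmul, key']
  have hKp : p'^2 * K ≤ p'^2 * (D+r)^2 :=
    mul_le_mul_of_nonneg_left (le_of_lt h1) (by positivity)
  have hrk : r^2*K = p'^2*K + q'^2*K := by rw [← hpq]; ring
  have h6 : q'^2 * ((B*x₂ + r)^2 + D^2*y₂^2) ≤ q'^2 * K := by nlinarith [key, hKp, hrk]
  have h7 := le_of_mul_le_mul_left h6 (by positivity : (0:ℝ) < q'^2)
  linarith [h7]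

theorem stmt1 (a b c : ℂ) :
    ∃ a' b' c' : ℝ,
      supBidisk (a' : ℂ) (b' : ℂ) (c' : ℂ) ≤ supBidisk a b c ∧
      (|a'| ^ ((4:ℝ)/3) + |b'| ^ ((4:ℝ)/3) + |c'| ^ ((4:ℝ)/3)) ^ ((3:ℝ)/4)
        = (‖a‖ ^ ((4:ℝ)/3) + ‖b‖ ^ ((4:ℝ)/3)
            + ‖c‖ ^ ((4:ℝ)/3)) ^ ((3:ℝ)/4) := by
  obtain ⟨u, hu1, hu⟩ := exists_unit_sq a
  obtain ⟨v, hv1, hv⟩ := exists_unit_sq c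
  set A := ‖a‖ with hA
  set C := ‖c‖ with hC
  set S := supBidisk a b c with hS
  have hS0 : 0 ≤ S := supBidisk_nonneg a b c
  set b₀ : ℂ := u * v * b with hb₀
  set p := b₀.re with hp
  set q := b₀.im with hq
  set r := ‖b‖ with hr
  have hb₀abs : ‖b₀‖ = r := by
    rw [hb₀, norm_mul, norm_mul, hu1, hv1]; ring
  have hr2 : r^2 = p^2 + q^2 := by
    rw [← hb₀abs, Complex.sq_norm, Complex.normSq_apply]; ring
  have hA0 : 0 ≤ A := norm_nonneg a
  have hC0 : 0 ≤ C := norm_nonneg c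
  have hr0 : 0 ≤ r := norm_nonneg b
  -- The hypothesis of the core lemma
  have H : ∀ x y : ℝ, x^2 + y^2 = 1 →
      ((A+C)*x + p)^2 + ((A-C)*y + q)^2 ≤ S^2 := by
    intro x y hxy
    set ζ : ℂ := ⟨x, y⟩ with hζ
    have hζabs : ‖ζ‖ = 1 := by
      have h2 : ‖ζ‖ ^ 2 = 1 := by
        rw [Complex.sq_norm, Complex.normSq_apply]
        show x * x + y * y = 1
        nlinarith
      nlinarith [norm_nonneg ζ]
    obtain ⟨ξ, hξ⟩ := IsAlgClosed.exists_pow_nat_eq ζ zero_lt_two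
    have hξabs : ‖ξ‖ = 1 := by
      have h2 : ‖ξ‖ ^ 2 = 1 := by rw [← norm_pow, hξ, hζabs]
      nlinarith [norm_nonneg ξ]
    set z' := u * ξ with hz'
    set w' := v * (starRingEnd ℂ) ξ with hw'
    have hz'1 : ‖z'‖ ≤ 1 := by
      rw [hz', norm_mul, hu1, hξabs]; norm_num
    have hw'1 : ‖w'‖ ≤ 1 := by
      rw [hw', norm_mul, hv1, Complex.norm_conj, hξabs]; norm_num
    have hξc : ξ * (starRingEnd ℂ) ξ = 1 := by
      rw [Complex.mul_conj]
      norm_cast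
      rw [Complex.normSq_eq_norm_sq, hξabs]; norm_num
    have hval : a * z'^2 + b * z' * w' + c * w'^2
        = (A:ℂ) * ζ + b₀ + (C:ℂ) * (starRingEnd ℂ) ζ := by
      have e1 : a * z'^2 = (A:ℂ) * ζ := by
        rw [hz', show a * (u*ξ)^2 = (u^2 * a) * ξ^2 from by ring, hu, hξ]
      have e2 : b * z' * w' = b₀ := by
        rw [hz', hw', show b * (u*ξ) * (v * (starRingEnd ℂ) ξ)
          = (u*v*b) * (ξ * (starRingEnd ℂ) ξ) from by ring, hξc, mul_one, hb₀]
      have e3 : c * w'^2 = (C:ℂ) * (starRingEnd ℂ) ζ := by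
        rw [hw', show c * (v * (starRingEnd ℂ) ξ)^2
          = (v^2 * c) * ((starRingEnd ℂ) ξ)^2 from by ring, hv, ← map_pow, hξ]
      rw [e1, e2, e3]
    have hle : ‖(A:ℂ) * ζ + b₀ + (C:ℂ) * (starRingEnd ℂ) ζ‖ ≤ S := by
      rw [← hval]; exact le_supBidisk a b c hz'1 hw'1
    have hsq : ‖(A:ℂ) * ζ + b₀ + (C:ℂ) * (starRingEnd ℂ) ζ‖ ^ 2
        = ((A+C)*x + p)^2 + ((A-C)*y + q)^2 := by
      rw [Complex.sq_norm, Complex.normSq_apply]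
      simp only [Complex.add_re, Complex.add_im, Complex.mul_re, Complex.mul_im,
        Complex.conj_re, Complex.conj_im, Complex.ofReal_re, Complex.ofReal_im]
      show (A * x - 0 * y + p + (C * x - 0 * (-y))) * (A * x - 0 * y + p + (C * x - 0 * (-y)))
          + (A * y + 0 * x + q + (C * (-y) + 0 * x)) * (A * y + 0 * x + q + (C * (-y) + 0 * x))
          = _
      ring
    nlinarith [hle, norm_nonneg ((A:ℂ) * ζ + b₀ + (C:ℂ) * (starRingEnd ℂ) ζ), hsq]
  rcases core hA0 hC0 hr0 hr2 H with h | h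
  · -- choose (A, r, C)
    refine ⟨A, r, C, ?_, ?_⟩
    · apply supBidisk_le
      intro z w hz hw
      have h1 := abs_val_le (A:ℂ) (r:ℂ) (C:ℂ) z w hz hw
      have h2 : ‖(A:ℂ)‖ + ‖(r:ℂ)‖ + ‖(C:ℂ)‖ = A + r + C := by
        rw [Complex.norm_of_nonneg hA0, Complex.norm_of_nonneg hr0,
          Complex.norm_of_nonneg hC0]
      have h3 : A + r + C ≤ S := by nlinarith
      linarith
    · rw [abs_of_nonneg hA0, abs_of_nonneg hr0, abs_of_nonneg hC0]
  · -- choose (A, r, -C)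
    refine ⟨A, r, -C, ?_, ?_⟩
    · apply supBidisk_le
      apply maxmod
      intro z w hz hw
      set η := z * (starRingEnd ℂ) w with hη
      have hηabs : ‖η‖ = 1 := by
        rw [hη, norm_mul, Complex.norm_conj, hz, hw]; norm_num
      have hηsq : η.re^2 + η.im^2 = 1 := by
        have := Complex.sq_norm η
        rw [hηabs] at this
        rw [Complex.normSq_apply] at this
        nlinarith [this]
      have hzc : z * (starRingEnd ℂ) z = 1 := by
        rw [Complex.mul_conj]
        norm_cast
        rw [Complex.normSq_eq_norm_sq, hz]; norm_num
      have hwc : w * (starRingEnd ℂ) w = 1 := by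
        rw [Complex.mul_conj]
        norm_cast
        rw [Complex.normSq_eq_norm_sq, hw]; norm_num
      have hident : (↑A) * z^2 + (↑r) * z * w + (↑(-C)) * w^2
          = (z*w) * ((A:ℂ) * η + (r:ℂ) - (C:ℂ) * (starRingEnd ℂ) η) := by
        rw [hη]
        simp only [map_mul, Complex.conj_conj, Complex.ofReal_neg]
        linear_combination (-(A:ℂ)*z^2) * hwc + ((C:ℂ)*w^2) * hzc
      have habs : ‖(↑A) * z^2 + (↑r) * z * w + (↑(-C)) * w^2‖
          = ‖(A:ℂ) * η + (r:ℂ) - (C:ℂ) * (starRingEnd ℂ) η‖ := by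
        rw [hident, norm_mul, norm_mul, hz, hw]; ring
      have hval := h η.re η.im hηsq
      have hsq : ‖(A:ℂ) * η + (r:ℂ) - (C:ℂ) * (starRingEnd ℂ) η‖ ^ 2
          = ((A-C)*η.re + r)^2 + (A+C)^2*η.im^2 := by
        rw [Complex.sq_norm, Complex.normSq_apply]
        simp only [Complex.sub_re, Complex.sub_im, Complex.add_re, Complex.add_im,
          Complex.mul_re, Complex.mul_im, Complex.conj_re, Complex.conj_im,
          Complex.ofReal_re, Complex.ofReal_im]
        ring
      rw [habs]
      nlinarith [hval, hsq, norm_nonneg ((A:ℂ) * η + (r:ℂ) - (C:ℂ) * (starRingEnd ℂ) η), hS0]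
    · rw [abs_of_nonneg hA0, abs_of_nonneg hr0, abs_neg, abs_of_nonneg hC0]
end

section
/- For the subspace E_ℝ = {az² + bwz + cw² : a, b, c ∈ ℝ} of 2-homogeneous polynomials on ℂ², the supremum of (|a|^{4/3} + |b|^{4/3} + |c|^{4/3})^{3/4} over all (a,b,c) ∈ ℝ³ with sup_{|z|,|w|≤1} |az² + bwz + cw²| ≤ 1 equals (3/2)^{1/4}. -/
set_option maxHeartbeats 1600000

/-! ### Pointwise elementary power inequalities -/

theorem pow43_le_quad (x t : ℝ) (hx : 0 ≤ x) (ht : 0 < t) :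
    x ^ ((4:ℝ)/3) ≤ t^2/3 + 2/(3*t)*x^2 := by
  set y := x ^ ((2:ℝ)/3) with hy
  have hy0 : 0 ≤ y := Real.rpow_nonneg hx _
  have h1 : x ^ ((4:ℝ)/3) = y^2 := by
    rw [hy, ← Real.rpow_natCast (x ^ ((2:ℝ)/3)) 2, ← Real.rpow_mul hx]
    norm_num
  have h2 : x^2 = y^3 := by
    rw [hy, ← Real.rpow_natCast (x ^ ((2:ℝ)/3)) 3, ← Real.rpow_mul hx]
    norm_num
  rw [h1, h2, show t^2/3 + 2/(3*t)*y^3 = (t^3 + 2*y^3)/(3*t) by field_simp,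
    le_div_iff₀ (by positivity)]
  nlinarith [mul_nonneg (sq_nonneg (t - y)) (by linarith : (0:ℝ) ≤ t + 2*y)]

theorem pow43_le_lin (x m : ℝ) (hx : 0 ≤ x) (hm : 0 < m) :
    x ^ ((4:ℝ)/3) ≤ x^2/(3*m^2) + 2/3*(m*x) := by
  set y := x ^ ((1:ℝ)/3) with hy
  have hy0 : 0 ≤ y := Real.rpow_nonneg hx _
  have h1 : x ^ ((4:ℝ)/3) = y^4 := by
    rw [hy, ← Real.rpow_natCast (x ^ ((1:ℝ)/3)) 4, ← Real.rpow_mul hx]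
    norm_num
  have h2 : x^2 = y^6 := by
    rw [hy, ← Real.rpow_natCast (x ^ ((1:ℝ)/3)) 6, ← Real.rpow_mul hx]
    norm_num
  have h3 : x = y^3 := by
    rw [hy, ← Real.rpow_natCast (x ^ ((1:ℝ)/3)) 3, ← Real.rpow_mul hx]
    norm_num
  rw [h1, h2]; nth_rewrite 1 [h3]
  rw [show y^6/(3*m^2) + 2/3*(m*y^3) = (y^6 + 2*m^3*y^3)/(3*m^2) by field_simp,
    le_div_iff₀ (by positivity)]
  nlinarith [mul_nonneg (mul_nonneg (pow_nonneg hy0 3) (sq_nonneg (y-m))) (by linarith : (0:ℝ) ≤ y + 2*m)]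

theorem pow43_le_self (x : ℝ) (h0 : 0 ≤ x) (h1 : x ≤ 1) : x ^ ((4:ℝ)/3) ≤ x := by
  rcases eq_or_lt_of_le h0 with h|h
  · rw [← h, Real.zero_rpow (by norm_num)]
  · calc x ^ ((4:ℝ)/3) ≤ x ^ ((1:ℝ)) := by
          apply Real.rpow_le_rpow_of_exponent_ge h h1; norm_num
       _ = x := Real.rpow_one x

theorem oneleT (T : ℝ) (hT : 0 < T) (hT3 : T^3 = 3/2) : 1 ≤ T := by
  nlinarith [sq_nonneg (T-1), sq_nonneg (T+1)]

/-! ### Two conditional bounds on the ℓ^{4/3} sum -/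

theorem sumA (a b g T : ℝ) (ha : 0 ≤ a) (hb : 0 ≤ b) (hg : 0 ≤ g)
    (hT : 0 < T) (hT3 : T^3 = 3/2) (hS : 2*(a^2+g^2) + b^2 ≤ 1) :
    a ^ ((4:ℝ)/3) + b ^ ((4:ℝ)/3) + g ^ ((4:ℝ)/3) ≤ T := by
  have h1 := pow43_le_quad a (1/(2*T)) ha (by positivity)
  have h2 := pow43_le_quad b (1/T) hb (by positivity)
  have h3 := pow43_le_quad g (1/(2*T)) hg (by positivity)
  have hT2 : (0:ℝ) < T^2 := by positivity
  have e1 : (1/(2*T))^2/3 = 1/(12*T^2) := by field_simp; ring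
  have e2 : (1/T)^2/3 = 1/(3*T^2) := by field_simp
  have e3 : (2:ℝ)/(3*(1/(2*T))) = 4*T/3 := by field_simp; ring
  have e4 : (2:ℝ)/(3*(1/T)) = 2*T/3 := by field_simp
  rw [e1, e3] at h1 h3
  rw [e2, e4] at h2
  have key : 1/(12*T^2) + 4*T/3*a^2 + (1/(3*T^2) + 2*T/3*b^2) + (1/(12*T^2) + 4*T/3*g^2) ≤ T := by
    rw [show 1/(12*T^2) + 4*T/3*a^2 + (1/(3*T^2) + 2*T/3*b^2) + (1/(12*T^2) + 4*T/3*g^2)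
        = (1/2 + (2*T^3/3)*(2*(a^2+g^2)+b^2))/T^2 by field_simp; ring, div_le_iff₀ hT2]
    nlinarith [mul_pos hT hT2]
  linarith

theorem sumB (a b g T : ℝ) (ha : 0 ≤ a) (hb : 0 ≤ b) (hg : 0 ≤ g)
    (hT : 0 < T) (hT3 : T^3 = 3/2)
    (hG : (a^2+b^2+g^2)*(a+b+g)^2 ≤ 3/2) :
    a ^ ((4:ℝ)/3) + b ^ ((4:ℝ)/3) + g ^ ((4:ℝ)/3) ≤ T := by
  rcases eq_or_lt_of_le (by positivity : (0:ℝ) ≤ a+b+g) with h|h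
  · have hA : a = 0 := by linarith
    have hB : b = 0 := by linarith
    have hG0 : g = 0 := by linarith
    rw [hA, hB, hG0, Real.zero_rpow (by norm_num)]
    linarith
  · set m := T/(a+b+g) with hm
    have hm0 : 0 < m := by positivity
    have h1 := pow43_le_lin a m ha hm0
    have h2 := pow43_le_lin b m hb hm0
    have h3 := pow43_le_lin g m hg hm0
    have hsum : a ^ ((4:ℝ)/3) + b ^ ((4:ℝ)/3) + g ^ ((4:ℝ)/3)
        ≤ (a^2+b^2+g^2)/(3*m^2) + 2/3*(m*(a+b+g)) := by
      have : (a^2+b^2+g^2)/(3*m^2) = a^2/(3*m^2) + b^2/(3*m^2) + g^2/(3*m^2) := by ring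
      rw [this]; linarith
    have hmm : m*(a+b+g) = T := by rw [hm]; field_simp
    have h2' : (a^2+b^2+g^2)/(3*m^2) = (a^2+b^2+g^2)*(a+b+g)^2/(3*T^2) := by
      rw [hm]; rw [div_pow]; field_simp
    rw [hmm, h2'] at hsum
    have hT2 : (0:ℝ) < 3*T^2 := by positivity
    have : (a^2+b^2+g^2)*(a+b+g)^2/(3*T^2) ≤ (3/2)/(3*T^2) := by gcongr
    have hfin : (3/2)/(3*T^2) + 2/3*T ≤ T := by
      rw [div_add' _ _ _ (by positivity), div_le_iff₀ hT2]
      nlinarith [mul_pos hT (mul_pos hT hT)]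
    calc a ^ ((4:ℝ)/3) + b ^ ((4:ℝ)/3) + g ^ ((4:ℝ)/3)
        ≤ (a^2+b^2+g^2)*(a+b+g)^2/(3*T^2) + 2/3*T := hsum
      _ ≤ (3/2)/(3*T^2) + 2/3*T := by linarith
      _ ≤ T := hfin

/-! ### Polynomial certificates for the three critical regions -/

theorem R2a_claim (s w d2 : ℝ) (hs0 : 0 ≤ s) (hs1 : s ≤ 1) (hw : 0 ≤ w) (hd : 0 ≤ d2)
    (h1 : w + s ≤ 1) (h2 : d2*(1-s) ≤ s*(1-w-s)) (h3 : w ≤ s - d2) (h4 : s ≤ 4*w) :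
    (s+d2+2*w)*(s+w) ≤ 3/2 := by
  nlinarith [sq_nonneg (s-w), sq_nonneg (s+w-1), mul_nonneg hw hd, mul_nonneg hs0 hd,
    sq_nonneg (s+w), mul_nonneg hw hs0]

theorem R2b_claim (s w d2 : ℝ) (hs0 : 0 ≤ s) (hs1 : s ≤ 1) (hw : 0 ≤ w) (hd : 0 ≤ d2)
    (h1 : w + s ≤ 1) (h2 : d2*(1-s) ≤ s*(1-w-s)) (h3 : w ≤ s - d2) (h4 : 4*w ≤ s) :
    (s+d2+2*w)*(s+2*w) ≤ 2 := by
  nlinarith [sq_nonneg (s-1), mul_nonneg hw hd, mul_nonneg hs0 hd, mul_nonneg hw hs0,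
    sq_nonneg (s+2*w-1)]

theorem R3_claim (o d : ℝ) (ho : 0 ≤ o) (hod : o^2 ≤ d) (hd1 : d ≤ 1) :
    (1 - o^2/2 + d^2/2)*(1+o-d)^2 ≤ 3/2 := by
  nlinarith [sq_nonneg (o-d), sq_nonneg (1-d), sq_nonneg (o*d), sq_nonneg (o-1/2),
    mul_nonneg ho (sq_nonneg (1-d)), sq_nonneg (d-o^2),
    mul_nonneg (sub_nonneg.2 hod) (sub_nonneg.2 hd1), sq_nonneg (1+o-d)]

/-- The core analysis in the case `a*c < 0`, with sorted absolute values. -/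
theorem core2 (a b g T : ℝ) (hg0 : 0 ≤ g) (hga : g ≤ a) (hb0 : 0 ≤ b)
    (hT : 0 < T) (hT3 : T^3 = 3/2)
    (hQ : ∀ x : ℝ, 0 ≤ x → x ≤ 1 →
      b^2 + (a+g)^2 + 2*b*(a-g)*x - 4*a*g*x^2 ≤ 1) :
    a ^ ((4:ℝ)/3) + b ^ ((4:ℝ)/3) + g ^ ((4:ℝ)/3) ≤ T := by
  have ha0 : 0 ≤ a := le_trans hg0 hga
  have hC0 : b^2 + (a+g)^2 ≤ 1 := by have := hQ 0 le_rfl zero_le_one; nlinarith [this]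
  have hC1 : b + a - g ≤ 1 := by
    have h := hQ 1 zero_le_one le_rfl
    nlinarith [sq_nonneg (b+a-g), sq_nonneg (b+a-g+1)]
  have hb1 : b ≤ 1 := by nlinarith [sq_nonneg (a+g)]
  have hag1 : a + g ≤ 1 := by nlinarith [sq_nonneg b, sq_nonneg (a+g), sq_nonneg (a+g+1)]
  have h1T := oneleT T hT hT3
  rcases eq_or_lt_of_le hg0 with hg|hg
  · -- g = 0 : easy, a + b ≤ 1
    have h3 := pow43_le_self a ha0 (by linarith)
    have h4 := pow43_le_self b hb0 (by linarith)
    have h5 : g ^ ((4:ℝ)/3) = 0 := by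
      rw [← hg, Real.zero_rpow (by norm_num : ((4:ℝ)/3) ≠ 0)]
    rw [h5]
    have : a + b ≤ 1 := by rw [← hg] at hC1; linarith
    linarith
  · -- g > 0
    have ha' : 0 < a := lt_of_lt_of_le hg hga
    have hag : 0 < 4*a*g := by have := mul_pos ha' hg; linarith
    rcases le_or_gt (b*(a-g)/(4*a*g)) 1 with hx1|hx1
    · -- vertex inside: constraint Cs
      have hxs0 : 0 ≤ b*(a-g)/(4*a*g) :=
        div_nonneg (mul_nonneg hb0 (by linarith)) (by linarith)
      have h := hQ _ hxs0 hx1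
      have hCs : b^2*(a-g)^2 ≤ 4*a*g*(1 - b^2 - (a+g)^2) := by
        have e : b^2 + (a+g)^2 + 2*b*(a-g)*(b*(a-g)/(4*a*g)) - 4*a*g*(b*(a-g)/(4*a*g))^2
            = b^2 + (a+g)^2 + (b*(a-g))^2/(4*a*g) := by
          field_simp; ring
        rw [e] at h
        have h' := (div_le_iff₀ hag).mp (by linarith : (b*(a-g))^2/(4*a*g) ≤ 1 - b^2 - (a+g)^2)
        nlinarith [h']
      rcases le_total (b^2) (4*a*g) with hreg|hreg
      · -- R2
        have hs1 : (a+g)^2 ≤ 1 := by nlinarith [sq_nonneg b]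
        have h2 : (a-g)^2*(1-(a+g)^2) ≤ (a+g)^2*(1-b^2-(a+g)^2) := by nlinarith [hCs]
        have h3 : b^2 ≤ (a+g)^2 - (a-g)^2 := by nlinarith [hreg]
        have hG : (a^2+b^2+g^2)*(a+b+g)^2 ≤ 3/2 := by
          rcases le_total ((a+g)^2) (4*b^2) with h4|h4
          · have claim := R2a_claim ((a+g)^2) (b^2) ((a-g)^2) (sq_nonneg _) hs1
              (sq_nonneg _) (sq_nonneg _) (by linarith) h2 h3 h4
            have e2 : (a+b+g)^2 ≤ 2*((a+g)^2+b^2) := by nlinarith [sq_nonneg (a+g-b)]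
            calc (a^2+b^2+g^2)*(a+b+g)^2
                = ((a+g)^2+(a-g)^2+2*b^2)/2*(a+b+g)^2 := by ring
              _ ≤ ((a+g)^2+(a-g)^2+2*b^2)/2*(2*((a+g)^2+b^2)) :=
                  mul_le_mul_of_nonneg_left e2 (by positivity)
              _ = ((a+g)^2+(a-g)^2+2*b^2)*((a+g)^2+b^2) := by ring
              _ ≤ 3/2 := by nlinarith [claim]
          · have claim := R2b_claim ((a+g)^2) (b^2) ((a-g)^2) (sq_nonneg _) hs1
              (sq_nonneg _) (sq_nonneg _) (by linarith) h2 h3 h4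
            have e2 : (a+b+g)^2 ≤ 3/2*(a+g)^2+3*b^2 := by nlinarith [sq_nonneg (a+g-2*b)]
            calc (a^2+b^2+g^2)*(a+b+g)^2
                = ((a+g)^2+(a-g)^2+2*b^2)/2*(a+b+g)^2 := by ring
              _ ≤ ((a+g)^2+(a-g)^2+2*b^2)/2*(3/2*(a+g)^2+3*b^2) :=
                  mul_le_mul_of_nonneg_left e2 (by positivity)
              _ = 3/4*(((a+g)^2+(a-g)^2+2*b^2)*((a+g)^2+2*b^2)) := by ring
              _ ≤ 3/4*2 := by nlinarith [claim]
              _ = 3/2 := by norm_num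
        exact sumB a b g T ha0 hb0 hg0 hT hT3 hG
      · -- R1
        have hb' : 0 < b := by nlinarith [hreg]
        have hS : 2*(a^2+g^2) + b^2 ≤ 1 := by
          nlinarith [hCs, hC0, mul_pos hb' hb', sq_nonneg (a-g),
            mul_nonneg (mul_nonneg ha0 hg0) (sq_nonneg (a-g))]
        exact sumA a b g T ha0 hb0 hg0 hT hT3 hS
    · -- vertex beyond 1: R3
      have hreg : 4*a*g < b*(a-g) := by rwa [lt_div_iff₀ hag, one_mul] at hx1
      have hd0 : (0:ℝ) ≤ a - g := by linarith
      have hdb : (a-g) + b ≤ 1 := by linarith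
      have hso : (a+g)^2 ≤ a-g := by
        nlinarith [hreg, mul_nonneg hd0 hb0]
      have claim := R3_claim (a+g) (a-g) (by linarith) hso (by linarith)
      have hG : (a^2+b^2+g^2)*(a+b+g)^2 ≤ 3/2 := by
        have f1 : a^2+b^2+g^2 ≤ 1 - (a+g)^2/2 + (a-g)^2/2 := by nlinarith [hC0]
        have f2 : (a+b+g)^2 ≤ (1+(a+g)-(a-g))^2 := by nlinarith [hdb, hb0, ha0, hg0]
        calc (a^2+b^2+g^2)*(a+b+g)^2
            ≤ (1 - (a+g)^2/2 + (a-g)^2/2)*(1+(a+g)-(a-g))^2 := by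
              apply mul_le_mul f1 f2 (sq_nonneg _) (by nlinarith [sq_nonneg (a+g), sq_nonneg (a-g), hso])
          _ ≤ 3/2 := claim
      exact sumB a b g T ha0 hb0 hg0 hT hT3 hG

/-! ### Evaluations of the polynomial on the bidisk -/

theorem evalR (a b c : ℝ)
    (h : ∀ z w : ℂ, ‖z‖ ≤ 1 → ‖w‖ ≤ 1 →
      ‖(a:ℂ) * z^2 + (b:ℂ) * z * w + (c:ℂ) * w^2‖ ≤ 1)
    (x : ℝ) (h1 : -1 ≤ x) (h2 : x ≤ 1) :
    b^2 + (a-c)^2 + 2*b*(a+c)*x + 4*a*c*x^2 ≤ 1 := by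
  set s : ℝ := Real.sqrt (1 - x^2) with hsdef
  have hs2 : s^2 = 1 - x^2 := Real.sq_sqrt (by nlinarith)
  set z : ℂ := ⟨x, s⟩ with hzdef
  have hz : ‖z‖ = 1 := by
    rw [Complex.norm_def, Complex.normSq_mk]
    rw [show x*x + s*s = 1 by nlinarith [hs2]]
    exact Real.sqrt_one
  have hP := h z 1 (le_of_eq hz) (by simp)
  set P : ℂ := (a:ℂ) * z^2 + (b:ℂ) * z * 1 + (c:ℂ) * 1^2 with hPdef
  have hre : P.re = a*(x^2-s^2)+b*x+c := by
    rw [hPdef, hzdef]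
    simp [pow_two, Complex.mul_re, Complex.mul_im]
    try ring
  have him : P.im = 2*a*x*s+b*s := by
    rw [hPdef, hzdef]
    simp [pow_two, Complex.mul_re, Complex.mul_im]
    try ring
  have hn : Complex.normSq P ≤ 1 := by
    have := Complex.sq_norm P
    nlinarith [hP, norm_nonneg P]
  rw [Complex.normSq_apply, hre, him] at hn
  calc b^2 + (a-c)^2 + 2*b*(a+c)*x + 4*a*c*x^2
      = (a*(x^2-s^2)+b*x+c) * (a*(x^2-s^2)+b*x+c) + (2*a*x*s+b*s) * (2*a*x*s+b*s) := by
        linear_combination (2*a*(a*x^2+b*x+c) - (2*a*x+b)^2 - a^2*(s^2+1-x^2)) * hs2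
    _ ≤ 1 := hn

theorem reducedQ (a b c : ℝ) (hac : a*c < 0) (hca : |c| ≤ |a|)
    (hR : ∀ x : ℝ, -1 ≤ x → x ≤ 1 → b^2 + (a-c)^2 + 2*b*(a+c)*x + 4*a*c*x^2 ≤ 1) :
    ∀ x : ℝ, 0 ≤ x → x ≤ 1 →
      |b|^2 + (|a|+|c|)^2 + 2 * |b| * (|a|-|c|)*x - 4*(|a| * |c|)*x^2 ≤ 1 := by
  intro x hx0 hx1
  have q1 : |a| * |c| = -(a*c) := by rw [← abs_mul, abs_of_neg hac]
  have q5 : (|a|+|c|)^2 = (a-c)^2 := by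
    nlinarith [sq_abs a, sq_abs c, q1]
  have q6 : (|a|-|c|)^2 = (a+c)^2 := by
    nlinarith [sq_abs a, sq_abs c, q1]
  have q3 : |a+c| = |a| - |c| := by
    rw [← Real.sqrt_sq_eq_abs, show (a+c)^2 = (|a|-|c|)^2 from q6.symm,
      Real.sqrt_sq (by linarith)]
  rcases le_or_gt 0 (b*(a+c)) with hs|hs
  · have q2 : b*(a+c) = |b| * (|a|-|c|) := by
      rw [← q3, ← abs_mul, abs_of_nonneg hs]
    have h := hR x (by linarith) hx1
    calc |b|^2 + (|a|+|c|)^2 + 2 * |b| * (|a|-|c|)*x - 4*(|a| * |c|)*x^2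
        = b^2 + (a-c)^2 + 2*b*(a+c)*x + 4*a*c*x^2 := by
          linear_combination sq_abs b + q5 - 2*x*q2 - 4*x^2*q1
      _ ≤ 1 := h
  · have q2 : -(b*(a+c)) = |b| * (|a|-|c|) := by
      rw [← q3, ← abs_mul, abs_of_neg hs]
    have h := hR (-x) (by linarith) (by linarith)
    calc |b|^2 + (|a|+|c|)^2 + 2 * |b| * (|a|-|c|)*x - 4*(|a| * |c|)*x^2
        = b^2 + (a-c)^2 + 2*b*(a+c)*(-x) + 4*a*c*(-x)^2 := by
          linear_combination sq_abs b + q5 - 2*x*q2 - 4*x^2*q1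
      _ ≤ 1 := h

theorem abs_add_of_mul_nonneg (a c : ℝ) (h : 0 ≤ a*c) : |a+c| = |a|+|c| := by
  rcases le_or_gt 0 a with ha|ha <;> rcases le_or_gt 0 c with hc|hc
  · rw [abs_of_nonneg ha, abs_of_nonneg hc, abs_of_nonneg (by linarith)]
  · have hc0 : a = 0 := by nlinarith
    rw [hc0]; simp
  · have ha0 : c = 0 := by nlinarith
    rw [ha0]; simp
  · rw [abs_of_neg ha, abs_of_neg hc, abs_of_neg (by linarith)]; ring

/-- Main upper bound: the ℓ^{4/3} sum of coefficients is at most (3/2)^{1/3}. -/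
theorem mainUpper (a b c T : ℝ) (hT : 0 < T) (hT3 : T^3 = 3/2)
    (h : ∀ z w : ℂ, ‖z‖ ≤ 1 → ‖w‖ ≤ 1 →
      ‖(a:ℂ) * z^2 + (b:ℂ) * z * w + (c:ℂ) * w^2‖ ≤ 1) :
    |a| ^ ((4:ℝ)/3) + |b| ^ ((4:ℝ)/3) + |c| ^ ((4:ℝ)/3) ≤ T := by
  have hR := evalR a b c h
  rcases le_or_gt 0 (a*c) with hac|hac
  · -- same signs : |a|+|b|+|c| ≤ 1
    have key : |a| + |b| + |c| ≤ 1 := by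
      have q0 : |a+c| = |a| + |c| := abs_add_of_mul_nonneg a c hac
      have qac : |a| * |c| = a*c := by rw [← abs_mul, abs_of_nonneg hac]
      have sqle : (|a| + |b| + |c|)^2 ≤ 1 := by
        rcases le_or_gt 0 (b*(a+c)) with hs|hs
        · have q2 : b*(a+c) = |b| * (|a|+|c|) := by rw [← q0, ← abs_mul, abs_of_nonneg hs]
          have h1 := hR 1 (by norm_num) le_rfl
          calc (|a| + |b| + |c|)^2 = b^2 + (a-c)^2 + 2*b*(a+c)*1 + 4*a*c*1^2 := by
                linear_combination sq_abs a + sq_abs b + sq_abs c + 2*qac - 2*q2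
            _ ≤ 1 := h1
        · have q2 : -(b*(a+c)) = |b| * (|a|+|c|) := by rw [← q0, ← abs_mul, abs_of_neg hs]
          have h1 := hR (-1) le_rfl (by norm_num)
          calc (|a| + |b| + |c|)^2 = b^2 + (a-c)^2 + 2*b*(a+c)*(-1) + 4*a*c*(-1)^2 := by
                linear_combination sq_abs a + sq_abs b + sq_abs c + 2*qac - 2*q2
            _ ≤ 1 := h1
      nlinarith [abs_nonneg a, abs_nonneg b, abs_nonneg c, sqle]
    have p1 := pow43_le_self |a| (abs_nonneg a) (by nlinarith [abs_nonneg b, abs_nonneg c])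
    have p2 := pow43_le_self |b| (abs_nonneg b) (by nlinarith [abs_nonneg a, abs_nonneg c])
    have p3 := pow43_le_self |c| (abs_nonneg c) (by nlinarith [abs_nonneg a, abs_nonneg b])
    linarith [oneleT T hT hT3]
  · -- mixed signs
    rcases le_total (|c|) (|a|) with hca|hca
    · have hQ := reducedQ a b c hac hca hR
      exact core2 |a| |b| |c| T (abs_nonneg c) hca (abs_nonneg b) hT hT3
        (fun x hx0 hx1 => by have := hQ x hx0 hx1; linarith)
    · have hac' : c*a < 0 := by linarith [mul_comm a c]
      have hR' : ∀ x : ℝ, -1 ≤ x → x ≤ 1 →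
          b^2 + (c-a)^2 + 2*b*(c+a)*x + 4*c*a*x^2 ≤ 1 := by
        intro x h1 h2
        have := hR x h1 h2
        calc b^2 + (c-a)^2 + 2*b*(c+a)*x + 4*c*a*x^2
            = b^2 + (a-c)^2 + 2*b*(a+c)*x + 4*a*c*x^2 := by ring
          _ ≤ 1 := this
      have hQ := reducedQ c b a hac' hca hR'
      have := core2 |c| |b| |a| T (abs_nonneg a) hca (abs_nonneg b) hT hT3
        (fun x hx0 hx1 => by have := hQ x hx0 hx1; linarith)
      linarith

/-! ### The extremal polynomial -/

theorem extremal_bound (z w : ℂ) (hz : ‖z‖ ≤ 1) (hw : ‖w‖ ≤ 1) :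
    ‖(((Real.sqrt 3/6 : ℝ)):ℂ) * z^2 + (((Real.sqrt 6/3 : ℝ)):ℂ) * z * w
      + (((-(Real.sqrt 3/6) : ℝ)):ℂ) * w^2‖ ≤ 1 := by
  set t : ℝ := Real.sqrt 3/6 with htdef
  set s : ℝ := Real.sqrt 6/3 with hsdef
  set r : ℝ := Real.sqrt 2 with hrdef
  have ht : t^2 = 1/12 := by
    rw [htdef, div_pow, Real.sq_sqrt (by norm_num : (0:ℝ) ≤ 3)]
    norm_num
  have hs : s^2 = 2/3 := by
    rw [hsdef, div_pow, Real.sq_sqrt (by norm_num : (0:ℝ) ≤ 6)]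
    norm_num
  have hr : r^2 = 2 := Real.sq_sqrt (by norm_num)
  have hts : t*s = r/6 := by
    rw [htdef, hsdef, hrdef]
    rw [div_mul_div_comm, ← Real.sqrt_mul (by norm_num : (0:ℝ) ≤ 3)]
    rw [show (3:ℝ)*6 = 2*9 by norm_num, Real.sqrt_mul (by norm_num : (0:ℝ) ≤ 2),
      show Real.sqrt 9 = 3 by
        rw [show (9:ℝ) = 3^2 by norm_num, Real.sqrt_sq (by norm_num : (0:ℝ) ≤ 3)]]
    ring
  set x := z.re with hx
  set y := z.im with hy
  set u := w.re with hu
  set v := w.im with hv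
  have hm : x^2 + y^2 ≤ 1 := by
    have h1 : Complex.normSq z ≤ 1 := by
      have := Complex.sq_norm z
      nlinarith [norm_nonneg z]
    rw [Complex.normSq_apply] at h1; nlinarith [h1]
  have hn : u^2 + v^2 ≤ 1 := by
    have h1 : Complex.normSq w ≤ 1 := by
      have := Complex.sq_norm w
      nlinarith [norm_nonneg w]
    rw [Complex.normSq_apply] at h1; nlinarith [h1]
  set P : ℂ := ((t:ℝ):ℂ) * z^2 + ((s:ℝ):ℂ) * z * w + (((-t) : ℝ):ℂ) * w^2 with hPdef
  have hre : P.re = t*(x^2-y^2-u^2+v^2) + s*(x*u-y*v) := by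
    rw [hPdef]
    simp [pow_two, Complex.mul_re, Complex.mul_im, Complex.add_re]
    ring
  have him : P.im = t*(2*x*y-2*u*v) + s*(x*v+y*u) := by
    rw [hPdef]
    simp [pow_two, Complex.mul_re, Complex.mul_im, Complex.add_im]
    ring
  have hid : P.re^2 + P.im^2
      = (x^2+y^2+u^2+v^2)^2/4 - (1/6)*(x^2+y^2-(u^2+v^2)-r*(x*u+y*v))^2 := by
    rw [hre, him]
    linear_combination ((x^2-y^2-u^2+v^2)^2+(2*x*y-2*u*v)^2)*ht
      + ((x*u-y*v)^2+(x*v+y*u)^2)*hs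
      + 2*((x^2-y^2-u^2+v^2)*(x*u-y*v)+(2*x*y-2*u*v)*(x*v+y*u))*hts
      + ((x*u+y*v)^2/6)*hr
  have hnormSq : Complex.normSq P ≤ 1 := by
    rw [Complex.normSq_apply, show P.re*P.re+P.im*P.im = P.re^2+P.im^2 by ring, hid]
    nlinarith [sq_nonneg (x^2+y^2-(u^2+v^2)-r*(x*u+y*v)), sq_nonneg (x^2+y^2+u^2+v^2),
      sq_nonneg x, sq_nonneg y, sq_nonneg u, sq_nonneg v, hm, hn]
  have habs : (‖P‖)^2 ≤ 1 := by rw [Complex.sq_norm]; exact hnormSq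
  nlinarith [norm_nonneg P, habs]

/-! ### sSup plumbing and numerology -/

theorem bidisk_pointwise (a b c : ℂ) (h : supBidisk a b c ≤ 1) :
    ∀ z w : ℂ, ‖z‖ ≤ 1 → ‖w‖ ≤ 1 →
      ‖a * z^2 + b * z * w + c * w^2‖ ≤ 1 := by
  intro z w hz hw
  have hbdd : BddAbove {r : ℝ | ∃ z w : ℂ, ‖z‖ ≤ 1 ∧ ‖w‖ ≤ 1 ∧
      r = ‖a * z^2 + b * z * w + c * w^2‖} := by
    refine ⟨‖a‖ + ‖b‖ + ‖c‖, ?_⟩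
    rintro r ⟨z, w, hz, hw, rfl⟩
    have h0z := norm_nonneg z
    have h0w := norm_nonneg w
    calc ‖a * z^2 + b * z * w + c * w^2‖
        ≤ ‖a * z^2 + b * z * w‖ + ‖c * w^2‖ := norm_add_le _ _
      _ ≤ ‖a * z^2‖ + ‖b * z * w‖ + ‖c * w^2‖ := by
          linarith [norm_add_le (a * z^2) (b * z * w)]
      _ = ‖a‖ * (‖z‖)^2 + ‖b‖ * (‖z‖ * ‖w‖)
            + ‖c‖ * (‖w‖)^2 := by
          simp [map_mul, map_pow]; ring
      _ ≤ ‖a‖ * 1 + ‖b‖ * 1 + ‖c‖ * 1 := by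
          have := norm_nonneg a
          have := norm_nonneg b
          have := norm_nonneg c
          gcongr <;> nlinarith
      _ = ‖a‖ + ‖b‖ + ‖c‖ := by ring
  exact le_trans (le_csSup hbdd ⟨z, w, hz, hw, rfl⟩) h

theorem Tfacts : (0:ℝ) < ((3:ℝ)/2) ^ ((1:ℝ)/3) ∧ (((3:ℝ)/2) ^ ((1:ℝ)/3))^3 = 3/2 := by
  constructor
  · exact Real.rpow_pos_of_pos (by norm_num) _
  · rw [← Real.rpow_natCast (((3:ℝ)/2) ^ ((1:ℝ)/3)) 3, ← Real.rpow_mul (by norm_num : (0:ℝ) ≤ 3/2)]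
    norm_num

theorem sqrt312 : Real.sqrt 3/6 = ((1:ℝ)/12) ^ ((1:ℝ)/2) := by
  rw [← Real.sqrt_eq_rpow, show (1:ℝ)/12 = 3*(1/6)^2 by norm_num,
    Real.sqrt_mul (by norm_num : (0:ℝ) ≤ 3), Real.sqrt_sq (by norm_num : (0:ℝ) ≤ 1/6)]
  ring

theorem sqrt623 : Real.sqrt 6/3 = ((2:ℝ)/3) ^ ((1:ℝ)/2) := by
  rw [← Real.sqrt_eq_rpow, show (2:ℝ)/3 = 6*(1/3)^2 by norm_num,
    Real.sqrt_mul (by norm_num : (0:ℝ) ≤ 6), Real.sqrt_sq (by norm_num : (0:ℝ) ≤ 1/3)]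
  ring

theorem value_id :
    |Real.sqrt 3/6| ^ ((4:ℝ)/3) + |Real.sqrt 6/3| ^ ((4:ℝ)/3) + |(-(Real.sqrt 3/6))| ^ ((4:ℝ)/3)
      = ((3:ℝ)/2) ^ ((1:ℝ)/3) := by
  have h3 : (0:ℝ) ≤ Real.sqrt 3/6 := by positivity
  have h6 : (0:ℝ) ≤ Real.sqrt 6/3 := by positivity
  rw [abs_neg, abs_of_nonneg h3, abs_of_nonneg h6, sqrt312, sqrt623]
  rw [← Real.rpow_mul (by norm_num : (0:ℝ) ≤ 1/12), ← Real.rpow_mul (by norm_num : (0:ℝ) ≤ 2/3)]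
  norm_num
  have e1 : ((1:ℝ)/12) ^ ((2:ℝ)/3) = ((2:ℝ)/3) ^ ((2:ℝ)/3) * (1/4) := by
    rw [show (1:ℝ)/12 = (2/3)*(1/8) by norm_num,
      Real.mul_rpow (by norm_num) (by norm_num),
      show (1:ℝ)/8 = (1/2)^(3:ℕ) by norm_num, ← Real.rpow_natCast ((1:ℝ)/2) 3,
      ← Real.rpow_mul (by norm_num : (0:ℝ) ≤ 1/2)]
    norm_num
  have e2 : ((3:ℝ)/2) ^ ((1:ℝ)/3) = (3/2) * ((2:ℝ)/3) ^ ((2:ℝ)/3) := by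
    have : ((2:ℝ)/3) ^ ((2:ℝ)/3) = ((3:ℝ)/2) ^ (-((2:ℝ)/3)) := by
      rw [Real.rpow_neg (by norm_num : (0:ℝ) ≤ 3/2), ← Real.inv_rpow (by norm_num : (0:ℝ) ≤ 3/2)]
      norm_num
    rw [this, show (1:ℝ)/3 = 1 + (-(2:ℝ)/3) by norm_num,
      Real.rpow_add (by norm_num : (0:ℝ) < 3/2), Real.rpow_one]
    norm_num
  rw [e1, e2]
  ring

/-! ### Main theorem -/

theorem stmt3 :
    sSup {r : ℝ | ∃ a b c : ℝ, supBidisk (a : ℂ) (b : ℂ) (c : ℂ) ≤ 1 ∧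
        r = (|a| ^ ((4:ℝ)/3) + |b| ^ ((4:ℝ)/3) + |c| ^ ((4:ℝ)/3)) ^ ((3:ℝ)/4)}
      = ((3:ℝ)/2) ^ ((1:ℝ)/4) := by
  obtain ⟨hT, hT3⟩ := Tfacts
  have hKT : (((3:ℝ)/2) ^ ((1:ℝ)/3)) ^ ((3:ℝ)/4) = ((3:ℝ)/2) ^ ((1:ℝ)/4) := by
    rw [← Real.rpow_mul (by norm_num : (0:ℝ) ≤ 3/2)]
    norm_num
  have hmem : ((3:ℝ)/2) ^ ((1:ℝ)/4) ∈ {r : ℝ | ∃ a b c : ℝ, supBidisk (a : ℂ) (b : ℂ) (c : ℂ) ≤ 1 ∧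
      r = (|a| ^ ((4:ℝ)/3) + |b| ^ ((4:ℝ)/3) + |c| ^ ((4:ℝ)/3)) ^ ((3:ℝ)/4)} := by
    refine ⟨Real.sqrt 3/6, Real.sqrt 6/3, -(Real.sqrt 3/6), ?_, ?_⟩
    · apply Real.sSup_le _ zero_le_one
      rintro r ⟨z, w, hz, hw, rfl⟩
      exact extremal_bound z w hz hw
    · rw [value_id, hKT]
  have hub : ∀ r ∈ {r : ℝ | ∃ a b c : ℝ, supBidisk (a : ℂ) (b : ℂ) (c : ℂ) ≤ 1 ∧
      r = (|a| ^ ((4:ℝ)/3) + |b| ^ ((4:ℝ)/3) + |c| ^ ((4:ℝ)/3)) ^ ((3:ℝ)/4)},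
      r ≤ ((3:ℝ)/2) ^ ((1:ℝ)/4) := by
    rintro r ⟨a, b, c, hsup, rfl⟩
    have hpt := bidisk_pointwise _ _ _ hsup
    have hf := mainUpper a b c _ hT hT3 hpt
    have h0 : (0:ℝ) ≤ |a| ^ ((4:ℝ)/3) + |b| ^ ((4:ℝ)/3) + |c| ^ ((4:ℝ)/3) := by positivity
    calc (|a| ^ ((4:ℝ)/3) + |b| ^ ((4:ℝ)/3) + |c| ^ ((4:ℝ)/3)) ^ ((3:ℝ)/4)
        ≤ (((3:ℝ)/2) ^ ((1:ℝ)/3)) ^ ((3:ℝ)/4) :=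
          Real.rpow_le_rpow h0 hf (by norm_num)
      _ = ((3:ℝ)/2) ^ ((1:ℝ)/4) := hKT
  exact le_antisymm (csSup_le ⟨_, hmem⟩ hub)
    (le_csSup ⟨((3:ℝ)/2) ^ ((1:ℝ)/4), fun r hr => hub r hr⟩ hmem)
end

section
/- There exist a, b, c ∈ ℂ with sup_{|z|,|w|≤1} |az² + bzw + cw²| = 1 and (|a|^{4/3} + |b|^{4/3} + |c|^{4/3})^{3/4} = (3/2)^{1/4}; in particular one may take the extremal polynomial with a = (√3)/6, c = −(√3)/6, and b = √(4·(1/12)·(1/(((√3)/3)²) − 1)). -/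
lemma bidisk_bound (s b : ℝ) (hs : s^2 = 1/12) (hb : b^2 = 2/3)
    (z w : ℂ) (hz : ‖z‖ ≤ 1) (hw : ‖w‖ ≤ 1) :
    ‖(s:ℂ) * z^2 + (b:ℂ) * z * w + ((-s : ℝ):ℂ) * w^2‖ ≤ 1 := by
  have hz2 : ‖z‖ ^ 2 ≤ 1 := pow_le_one₀ (norm_nonneg z) hz
  have hw2 : ‖w‖ ^ 2 ≤ 1 := pow_le_one₀ (norm_nonneg w) hw
  rw [Complex.sq_norm, Complex.normSq_apply] at hz2 hw2
  have hz0 : 0 ≤ z.re^2 + z.im^2 := by positivity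
  have hw0 : 0 ≤ w.re^2 + w.im^2 := by positivity
  rw [Complex.norm_def]
  rw [Real.sqrt_le_one]
  simp only [Complex.normSq_apply, Complex.add_re, Complex.add_im, Complex.mul_re,
    Complex.mul_im, pow_two, Complex.ofReal_re, Complex.ofReal_im]
  ring_nf
  nlinarith [sq_nonneg (2*s*(z.re*w.re + z.im*w.im) - b*((z.re*z.re+z.im*z.im) - (w.re*w.re+w.im*w.im))/2),
    sq_nonneg (z.re*z.re+z.im*z.im + w.re*w.re+w.im*w.im),
    mul_nonneg hz0 hw0, sq_nonneg (z.re*z.re+z.im*z.im - (w.re*w.re+w.im*w.im)),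
    mul_nonneg (mul_nonneg hz0 hz0) hw0]

lemma cube_root_mul (r : ℝ) (hr : 0 ≤ r) :
    ((3/2) * r^3 : ℝ) ^ ((1:ℝ)/3) = (3/2:ℝ) ^ ((1:ℝ)/3) * r := by
  rw [Real.mul_rpow (by norm_num) (by positivity), ← Real.rpow_natCast r 3,
    ← Real.rpow_mul hr]
  norm_num

lemma rpow_twothirds (x : ℝ) (hx : 0 ≤ x) :
    x ^ ((2:ℝ)/3) = (x^2) ^ ((1:ℝ)/3) := by
  rw [← Real.rpow_natCast x 2, ← Real.rpow_mul hx]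
  norm_num

theorem stmt5 :
    ∃ a b c : ℂ,
      a = ((Real.sqrt 3 / 6 : ℝ) : ℂ) ∧
      c = ((-(Real.sqrt 3) / 6 : ℝ) : ℂ) ∧
      b = ((Real.sqrt (4 * (1/12) * (1 / ((Real.sqrt 3 / 3)^2) - 1)) : ℝ) : ℂ) ∧
      supBidisk a b c = 1 ∧
      (‖a‖ ^ ((4:ℝ)/3) + ‖b‖ ^ ((4:ℝ)/3)
        + ‖c‖ ^ ((4:ℝ)/3)) ^ ((3:ℝ)/4) = ((3:ℝ)/2) ^ ((1:ℝ)/4) := by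
  set s : ℝ := Real.sqrt 3 / 6 with hs_def
  have hs0 : 0 ≤ s := by positivity
  have hs : s^2 = 1/12 := by
    rw [hs_def, div_pow, Real.sq_sqrt (by norm_num : (0:ℝ) ≤ 3)]; norm_num
  have hbval : (4 * (1/12) * (1 / ((Real.sqrt 3 / 3)^2) - 1) : ℝ) = 2/3 := by
    rw [div_pow, Real.sq_sqrt (by norm_num : (0:ℝ) ≤ 3)]; norm_num
  set bR : ℝ := Real.sqrt (4 * (1/12) * (1 / ((Real.sqrt 3 / 3)^2) - 1)) with hb_def
  have hbR : bR = Real.sqrt (2/3) := by rw [hb_def, hbval]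
  have hb0 : 0 ≤ bR := Real.sqrt_nonneg _
  have hb : bR^2 = 2/3 := by rw [hbR, Real.sq_sqrt (by norm_num : (0:ℝ) ≤ 2/3)]
  have hcs : ((-(Real.sqrt 3)/6 : ℝ) : ℂ) = ((-s : ℝ) : ℂ) := by
    rw [hs_def]; norm_num [neg_div]
  refine ⟨(s:ℂ), (bR:ℂ), ((-(Real.sqrt 3)/6 : ℝ) : ℂ), rfl, rfl, rfl, ?_, ?_⟩
  · -- supBidisk = 1
    rw [hcs]
    unfold supBidisk
    apply le_antisymm
    · apply csSup_le
      · exact ⟨‖(s:ℂ) * 0^2 + (bR:ℂ) * 0 * 0 + ((-s:ℝ):ℂ) * 0^2‖,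
          0, 0, by simp, by simp, rfl⟩
      · rintro r ⟨z, w, hz, hw, rfl⟩
        exact bidisk_bound s bR hs hb z w hz hw
    · apply le_csSup
      · exact ⟨1, by rintro r ⟨z, w, hz, hw, rfl⟩; exact bidisk_bound s bR hs hb z w hz hw⟩
      · refine ⟨Complex.I, 1, by simp, by simp, ?_⟩
        have hP : (s:ℂ) * Complex.I^2 + (bR:ℂ) * Complex.I * 1 + ((-s:ℝ):ℂ) * 1^2
            = ((-(2*s) : ℝ) : ℂ) + (bR : ℝ) * Complex.I := by
          rw [Complex.I_sq]; push_cast; ring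
        rw [hP, Complex.norm_def, Complex.normSq_add_mul_I]
        rw [show ((-(2*s):ℝ)^2 + bR^2 : ℝ) = 1 by nlinarith]
        simp
  · -- norm computation
    have ha : ‖(s:ℂ)‖ = s := by
      rw [Complex.norm_real]; exact abs_of_nonneg hs0
    have hbabs : ‖(bR:ℂ)‖ = bR := by
      rw [Complex.norm_real]; exact abs_of_nonneg hb0
    have hcabs : ‖((-(Real.sqrt 3)/6 : ℝ) : ℂ)‖ = s := by
      rw [hcs, Complex.norm_real]; simp [abs_of_nonneg hs0]
    rw [ha, hbabs, hcabs]
    have hsr : s = (1/12 : ℝ) ^ ((1:ℝ)/2) := by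
      rw [← Real.sqrt_eq_rpow, show (1/12 : ℝ) = s^2 by rw [hs], Real.sqrt_sq hs0]
    have hbr : bR = (2/3 : ℝ) ^ ((1:ℝ)/2) := by
      rw [hbR, Real.sqrt_eq_rpow]
    have e1 : s ^ ((4:ℝ)/3) = (1/12 : ℝ) ^ ((2:ℝ)/3) := by
      rw [hsr, ← Real.rpow_mul (by norm_num : (0:ℝ) ≤ 1/12)]; norm_num
    have e2 : bR ^ ((4:ℝ)/3) = (2/3 : ℝ) ^ ((2:ℝ)/3) := by
      rw [hbr, ← Real.rpow_mul (by norm_num : (0:ℝ) ≤ 2/3)]; norm_num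
    have f1 : (1/12 : ℝ) ^ ((2:ℝ)/3) = (3/2 : ℝ) ^ ((1:ℝ)/3) * (1/6) := by
      have : (1/12 : ℝ) ^ ((2:ℝ)/3) = ((1/144 : ℝ)) ^ ((1:ℝ)/3) := by
        rw [rpow_twothirds _ (by norm_num)]; norm_num
      rw [this, show (1/144 : ℝ) = (3/2) * (1/6)^3 by norm_num]
      exact cube_root_mul _ (by norm_num)
    have f2 : (2/3 : ℝ) ^ ((2:ℝ)/3) = (3/2 : ℝ) ^ ((1:ℝ)/3) * (2/3) := by
      have : (2/3 : ℝ) ^ ((2:ℝ)/3) = ((4/9 : ℝ)) ^ ((1:ℝ)/3) := by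
        rw [rpow_twothirds _ (by norm_num)]; norm_num
      rw [this, show (4/9 : ℝ) = (3/2) * (2/3)^3 by norm_num]
      exact cube_root_mul _ (by norm_num)
    rw [e1, e2, f1, f2, show (3/2 : ℝ) ^ ((1:ℝ)/3) * (1/6) + (3/2:ℝ)^((1:ℝ)/3) * (2/3)
      + (3/2:ℝ)^((1:ℝ)/3) * (1/6) = (3/2:ℝ)^((1:ℝ)/3) by ring,
      ← Real.rpow_mul (by norm_num : (0:ℝ) ≤ 3/2)]
    norm_num
end

section
/- For every t ∈ [1/2, 1], the 2-homogeneous polynomial P(x,y) = t x² − t y² + 2√(t(1−t)) xy satisfies sup_{|x|,|y|≤1} |P(x,y)| = 1. -/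
/-- Supremum of `|a x² + b x y + c y²|` over the unit square `[-1,1]²`. -/
noncomputable def supSquare (a b c : ℝ) : ℝ :=
  sSup {r : ℝ | ∃ x y : ℝ, |x| ≤ 1 ∧ |y| ≤ 1 ∧ r = |a * x^2 + b * x * y + c * y^2|}

theorem stmt6 (t : ℝ) (ht : t ∈ Set.Icc (1/2 : ℝ) 1) :
    supSquare t (2 * Real.sqrt (t * (1 - t))) (-t) = 1 := by
  obtain ⟨ht1, ht2⟩ := ht
  set s := Real.sqrt (t * (1 - t)) with hsdef
  have htpos : (0:ℝ) < t := by linarith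
  have hs0 : 0 ≤ s := Real.sqrt_nonneg _
  have hs2 : s ^ 2 = t * (1 - t) := Real.sq_sqrt (by nlinarith)
  have hst : s ≤ t := by nlinarith [sq_nonneg (s - t)]
  -- membership: value 1 attained at x = 1, y = s/t
  have hmem : (1:ℝ) ∈ {r : ℝ | ∃ x y : ℝ, |x| ≤ 1 ∧ |y| ≤ 1 ∧
      r = |t * x^2 + 2 * s * x * y + (-t) * y^2|} := by
    refine ⟨1, s / t, by norm_num, ?_, ?_⟩
    · rw [abs_of_nonneg (by positivity)]
      exact (div_le_one htpos).2 hst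
    · have : t * 1^2 + 2 * s * 1 * (s/t) + (-t) * (s/t)^2 = 1 := by
        field_simp
        nlinarith
      rw [this, abs_one]
  -- bound: every element is ≤ 1
  have hbdd : ∀ r ∈ {r : ℝ | ∃ x y : ℝ, |x| ≤ 1 ∧ |y| ≤ 1 ∧
      r = |t * x^2 + 2 * s * x * y + (-t) * y^2|}, r ≤ 1 := by
    rintro r ⟨x, y, hx, hy, rfl⟩
    have hx2 : x^2 ≤ 1 := by nlinarith [abs_nonneg x, sq_abs x]
    have hy2 : y^2 ≤ 1 := by nlinarith [abs_nonneg y, sq_abs y]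
    rw [abs_le]
    constructor
    · nlinarith [sq_nonneg (t*x*y + s),
        mul_nonneg (mul_nonneg (mul_pos htpos htpos).le (sub_nonneg.2 hy2))
          (by positivity : (0:ℝ) ≤ 1 + x^2)]
    · nlinarith [sq_nonneg (t*x*y - s),
        mul_nonneg (mul_nonneg (mul_pos htpos htpos).le (sub_nonneg.2 hx2))
          (by positivity : (0:ℝ) ≤ 1 + y^2)]
  unfold supSquare
  exact le_antisymm (csSup_le ⟨1, hmem⟩ hbdd) (le_csSup ⟨1, hbdd⟩ hmem)
end

section
/- The function f(t) = (2 t^{4/3} + (2√(t(1−t)))^{4/3})^{3/4} on [1/2, 1] attains its maximum at the unique point t₀ = (1/36)(2·(107 + 9√129)^{1/3} + (856 − 72√129)^{1/3} + 16), and f(t₀) ∈ (1.8373, 1.8374). -/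
noncomputable def f (t : ℝ) : ℝ :=
  (2 * t ^ ((4:ℝ)/3) + (2 * Real.sqrt (t * (1 - t))) ^ ((4:ℝ)/3)) ^ ((3:ℝ)/4)

noncomputable def t₀ : ℝ :=
  (1/36) * (2 * (107 + 9 * Real.sqrt 129) ^ ((1:ℝ)/3)
      + (856 - 72 * Real.sqrt 129) ^ ((1:ℝ)/3) + 16)

noncomputable def aR : ℝ := (107 + 9 * Real.sqrt 129) ^ ((1:ℝ)/3)
noncomputable def cR : ℝ := (107 - 9 * Real.sqrt 129) ^ ((1:ℝ)/3)
noncomputable def sR : ℝ := aR + cR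
noncomputable def gg (t : ℝ) : ℝ := 2 * t ^ ((4:ℝ)/3) + (4*(t - t^2)) ^ ((2:ℝ)/3)

lemma rpow_npow {x : ℝ} (hx : 0 ≤ x) (p : ℝ) (n : ℕ) : (x ^ p) ^ n = x ^ (p * n) := by
  rw [← Real.rpow_natCast (x ^ p) n, ← Real.rpow_mul hx]

lemma sqrt129_lt : Real.sqrt 129 < 107/9 := by
  rw [show (107:ℝ)/9 = Real.sqrt ((107/9)^2) by rw [Real.sqrt_sq]; norm_num]
  exact Real.sqrt_lt_sqrt (by norm_num) (by norm_num)

lemma h107 : (0:ℝ) ≤ 107 - 9 * Real.sqrt 129 := by nlinarith [sqrt129_lt]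
lemma h107' : (0:ℝ) ≤ 107 + 9 * Real.sqrt 129 := by
  nlinarith [Real.sqrt_nonneg (129:ℝ)]

lemma third_eq : ((1:ℝ)/3) = (((3:ℕ)):ℝ)⁻¹ := by norm_num

lemma ha3 : aR ^ 3 = 107 + 9 * Real.sqrt 129 := by
  unfold aR; rw [third_eq]; exact Real.rpow_inv_natCast_pow h107' (by norm_num)

lemma hc3 : cR ^ 3 = 107 - 9 * Real.sqrt 129 := by
  unfold cR; rw [third_eq]; exact Real.rpow_inv_natCast_pow h107 (by norm_num)

lemma hac : aR * cR = 10 := by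
  unfold aR cR
  rw [← Real.mul_rpow h107' h107]
  have : (107 + 9 * Real.sqrt 129) * (107 - 9 * Real.sqrt 129) = 1000 := by
    have := Real.sq_sqrt (by norm_num : (0:ℝ) ≤ 129)
    nlinarith [this]
  rw [this, third_eq, show (1000:ℝ) = 10 ^ (3:ℕ) by norm_num]
  exact Real.pow_rpow_inv_natCast (by norm_num) (by norm_num)

lemma hs3 : sR ^ 3 = 30 * sR + 214 := by
  unfold sR
  linear_combination ha3 + hc3 + (3 * (aR + cR)) * hac

lemma hs_nonneg : 0 ≤ sR := by
  exact add_nonneg (Real.rpow_nonneg h107' _) (Real.rpow_nonneg h107 _)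

lemma hs_lb : (76210350:ℝ)/10000000 < sR := by
  nlinarith [hs3, hs_nonneg, sq_nonneg (sR - 7), sq_nonneg sR]

lemma hs_ub : sR < (76210351:ℝ)/10000000 := by
  nlinarith [hs3, hs_nonneg, sq_nonneg (sR - 7), sq_nonneg sR]

lemma b_eq : (856 - 72 * Real.sqrt 129) ^ ((1:ℝ)/3) = 2 * cR := by
  unfold cR
  rw [show (856:ℝ) - 72 * Real.sqrt 129 = 8 * (107 - 9 * Real.sqrt 129) by ring,
    Real.mul_rpow (by norm_num) h107,
    show ((8:ℝ)) = 2 ^ (3:ℕ) by norm_num, third_eq,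
    Real.pow_rpow_inv_natCast (by norm_num) (by norm_num)]

lemma t0_eq : t₀ = (sR + 8) / 18 := by
  unfold t₀
  rw [b_eq]
  unfold sR aR
  ring

lemma t0_lb : (156210350:ℝ)/180000000 ≤ t₀ := by
  rw [t0_eq]; linarith [hs_lb]

lemma t0_ub : t₀ ≤ (156210351:ℝ)/180000000 := by
  rw [t0_eq]; linarith [hs_ub]

lemma t0_cubic : 12 * t₀^3 - 16 * t₀^2 + 6 * t₀ - 1 = 0 := by
  rw [t0_eq]
  linear_combination (1/486 : ℝ) * hs3

lemma gg_cont : Continuous gg := by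
  apply Continuous.add
  · exact continuous_const.mul (continuous_iff_continuousAt.mpr fun x =>
      Real.continuousAt_rpow_const x _ (Or.inr (by norm_num)))
  · apply continuous_iff_continuousAt.mpr
    intro x
    exact (Real.continuousAt_rpow_const _ _ (Or.inr (by norm_num))).comp (by fun_prop)

lemma gg_deriv {t : ℝ} (ht : t ∈ Set.Ioo (1/2:ℝ) 1) :
    HasDerivAt gg
      (2 * ((4:ℝ)/3 * t ^ ((4:ℝ)/3 - 1)) + (4 - 8*t) * ((2:ℝ)/3) * (4*(t - t^2)) ^ ((2:ℝ)/3 - 1)) t := by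
  obtain ⟨ht1, ht2⟩ := ht
  have ht0 : (0:ℝ) < t := by linarith
  have hu : 0 < 4*(t - t^2) := by nlinarith
  have h1 : HasDerivAt (fun t:ℝ => t ^ ((4:ℝ)/3)) ((4:ℝ)/3 * t ^ ((4:ℝ)/3 - 1)) t :=
    Real.hasDerivAt_rpow_const (Or.inl (ne_of_gt ht0))
  have h2 : HasDerivAt (fun t:ℝ => 4*(t - t^2)) (4 - 8*t) t := by
    have := ((hasDerivAt_id t).sub (hasDerivAt_pow 2 t)).const_mul (4:ℝ)
    exact this.congr_deriv (by push_cast; ring)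
  have h3 := h2.rpow_const (p := (2:ℝ)/3) (Or.inl (ne_of_gt hu))
  exact (h1.const_mul (2:ℝ)).add h3

lemma cube_facts {t : ℝ} (ht0 : 0 < t) (hu : 0 < 4*(t - t^2)) :
    0 ≤ t ^ ((4:ℝ)/3 - 1) ∧ (t ^ ((4:ℝ)/3 - 1))^3 = t ∧
    0 < (4*(t - t^2)) ^ ((1:ℝ)/3) ∧ ((4*(t - t^2)) ^ ((1:ℝ)/3))^3 = 4*(t - t^2) := by
  rw [show (4:ℝ)/3 - 1 = (1:ℝ)/3 by norm_num, third_eq]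
  exact ⟨Real.rpow_nonneg ht0.le _, Real.rpow_inv_natCast_pow ht0.le (by norm_num),
    Real.rpow_pos_of_pos hu _, Real.rpow_inv_natCast_pow hu.le (by norm_num)⟩

lemma neg_exp_eq {t : ℝ} (hu : 0 < 4*(t - t^2)) :
    (4*(t - t^2)) ^ ((2:ℝ)/3 - 1) = ((4*(t - t^2)) ^ ((1:ℝ)/3))⁻¹ := by
  rw [show (2:ℝ)/3 - 1 = -((1:ℝ)/3) by norm_num, Real.rpow_neg hu.le]

lemma Q_pos {t : ℝ} (ht1 : 1/2 ≤ t) (ht0' : 86/100 ≤ t₀) (ht0'' : t₀ ≤ 87/100) :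
    0 < 12*(t^2 + t*t₀ + t₀^2) - 16*(t + t₀) + 6 := by
  nlinarith [sq_nonneg (t - 1/2), mul_nonneg (by linarith : (0:ℝ) ≤ 12*t₀ - 4) (by linarith : (0:ℝ) ≤ t - 1/2),
    sq_nonneg (t₀ - 86/100)]

lemma gderiv_pos {t : ℝ} (h1 : 1/2 < t) (h2 : t < t₀) :
    0 < 2 * ((4:ℝ)/3 * t ^ ((4:ℝ)/3 - 1)) + (4 - 8*t) * ((2:ℝ)/3) * (4*(t - t^2)) ^ ((2:ℝ)/3 - 1) := by
  have hub : t₀ ≤ 87/100 := by linarith [t0_ub]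
  have hlb : 86/100 ≤ t₀ := by linarith [t0_lb]
  have ht0 : (0:ℝ) < t := by linarith
  have htlt1 : t < 1 := by linarith
  have hu : 0 < 4*(t - t^2) := by nlinarith
  obtain ⟨hA0, hA3, hB0, hB3⟩ := cube_facts ht0 hu
  set A := t ^ ((4:ℝ)/3 - 1) with hA
  set B := (4*(t - t^2)) ^ ((1:ℝ)/3) with hB
  rw [neg_exp_eq hu]
  have key : 8*t - 4 < 4*(A*B) := by
    apply lt_of_pow_lt_pow_left₀ 3 (by positivity)
    have e1 : (4*(A*B))^3 = 64 * (A^3 * B^3) := by ring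
    rw [e1, hA3, hB3]
    have hQ := Q_pos h1.le hlb hub
    nlinarith [mul_pos (by linarith : (0:ℝ) < t₀ - t) hQ, t0_cubic]
  have hmul : (2 * ((4:ℝ)/3 * A) + (4 - 8*t) * ((2:ℝ)/3) * B⁻¹) * B
      = (8/3)*(A*B) + (2/3)*(4 - 8*t) := by
    field_simp
    ring
  have hpos : 0 < (2 * ((4:ℝ)/3 * A) + (4 - 8*t) * ((2:ℝ)/3) * B⁻¹) * B := by
    rw [hmul]; linarith
  by_contra hcon
  push_neg at hcon
  nlinarith [mul_nonneg (neg_nonneg.mpr hcon) hB0.le]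

lemma gderiv_neg {t : ℝ} (h1 : t₀ < t) (h2 : t < 1) :
    2 * ((4:ℝ)/3 * t ^ ((4:ℝ)/3 - 1)) + (4 - 8*t) * ((2:ℝ)/3) * (4*(t - t^2)) ^ ((2:ℝ)/3 - 1) < 0 := by
  have hub : t₀ ≤ 87/100 := by linarith [t0_ub]
  have hlb : 86/100 ≤ t₀ := by linarith [t0_lb]
  have ht0 : (0:ℝ) < t := by linarith
  have hu : 0 < 4*(t - t^2) := by nlinarith
  obtain ⟨hA0, hA3, hB0, hB3⟩ := cube_facts ht0 hu
  set A := t ^ ((4:ℝ)/3 - 1) with hA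
  set B := (4*(t - t^2)) ^ ((1:ℝ)/3) with hB
  rw [neg_exp_eq hu]
  have key : 4*(A*B) < 8*t - 4 := by
    apply lt_of_pow_lt_pow_left₀ 3 (by nlinarith)
    have e1 : (4*(A*B))^3 = 64 * (A^3 * B^3) := by ring
    rw [e1, hA3, hB3]
    have hQ := Q_pos (by linarith : 1/2 ≤ t) hlb hub
    nlinarith [mul_pos (by linarith : (0:ℝ) < t - t₀) hQ, t0_cubic]
  have hmul : (2 * ((4:ℝ)/3 * A) + (4 - 8*t) * ((2:ℝ)/3) * B⁻¹) * B
      = (8/3)*(A*B) + (2/3)*(4 - 8*t) := by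
    field_simp
    ring
  have hneg : (2 * ((4:ℝ)/3 * A) + (4 - 8*t) * ((2:ℝ)/3) * B⁻¹) * B < 0 := by
    rw [hmul]; linarith
  by_contra hcon
  push_neg at hcon
  nlinarith [mul_nonneg hcon hB0.le]

lemma t0_mem' : t₀ ∈ Set.Ioo (1/2:ℝ) 1 :=
  ⟨by linarith [t0_lb], by linarith [t0_ub]⟩

lemma gg_mono : StrictMonoOn gg (Set.Icc (1/2:ℝ) t₀) := by
  apply strictMonoOn_of_deriv_pos (convex_Icc _ _) gg_cont.continuousOn
  intro x hx
  rw [interior_Icc] at hx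
  have hx' : x ∈ Set.Ioo (1/2:ℝ) 1 := ⟨hx.1, lt_trans hx.2 t0_mem'.2⟩
  rw [(gg_deriv hx').deriv]
  exact gderiv_pos hx.1 hx.2

lemma gg_anti : StrictAntiOn gg (Set.Icc t₀ (1:ℝ)) := by
  apply strictAntiOn_of_deriv_neg (convex_Icc _ _) gg_cont.continuousOn
  intro x hx
  rw [interior_Icc] at hx
  have hx' : x ∈ Set.Ioo (1/2:ℝ) 1 := ⟨lt_trans t0_mem'.1 hx.1, hx.2⟩
  rw [(gg_deriv hx').deriv]
  exact gderiv_neg hx.1 hx.2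

lemma gg_lt {t : ℝ} (ht : t ∈ Set.Icc (1/2:ℝ) 1) (hne : t ≠ t₀) : gg t < gg t₀ := by
  rcases lt_or_gt_of_ne hne with h | h
  · exact gg_mono ⟨ht.1, h.le⟩ ⟨t0_mem'.1.le, le_refl _⟩ h
  · exact gg_anti ⟨le_refl _, t0_mem'.2.le⟩ ⟨h.le, ht.2⟩ h

lemma f_eq {t : ℝ} (ht : t ∈ Set.Icc (1/2:ℝ) 1) : f t = gg t ^ ((3:ℝ)/4) := by
  have hu : 0 ≤ t * (1 - t) := by nlinarith [ht.1, ht.2]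
  have h2s : (0:ℝ) ≤ 2 * Real.sqrt (t * (1 - t)) := by positivity
  unfold f gg
  congr 2
  rw [show ((4:ℝ)/3) = 2 * ((2:ℝ)/3) by norm_num, Real.rpow_mul h2s,
    show ((2 * Real.sqrt (t * (1-t))) ^ (2:ℝ)) = (2 * Real.sqrt (t * (1-t)))^(2:ℕ) by
      rw [← Real.rpow_natCast]; norm_num]
  congr 1
  rw [mul_pow, Real.sq_sqrt hu]
  ring

lemma gg_nonneg {t : ℝ} (ht : t ∈ Set.Icc (1/2:ℝ) 1) : 0 ≤ gg t := by
  have h1 : (0:ℝ) ≤ t := by linarith [ht.1]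
  have h2 : (0:ℝ) ≤ 4*(t - t^2) := by nlinarith [ht.1, ht.2]
  exact add_nonneg (by positivity) (Real.rpow_nonneg h2 _)

theorem stmt7 :
    t₀ ∈ Set.Icc (1/2 : ℝ) 1 ∧
    (∀ t ∈ Set.Icc (1/2 : ℝ) 1, f t ≤ f t₀) ∧
    (∀ t ∈ Set.Icc (1/2 : ℝ) 1, f t = f t₀ → t = t₀) ∧
    f t₀ ∈ Set.Ioo (1.8373 : ℝ) 1.8374 := by
  have t0mem : t₀ ∈ Set.Icc (1/2:ℝ) 1 := ⟨t0_mem'.1.le, t0_mem'.2.le⟩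
  refine ⟨t0mem, ?_, ?_, ?_⟩
  · intro t ht
    rcases eq_or_ne t t₀ with rfl | hne
    · exact le_refl _
    · rw [f_eq ht, f_eq t0mem]
      exact Real.rpow_le_rpow (gg_nonneg ht) (gg_lt ht hne).le (by norm_num)
  · intro t ht heq
    by_contra hne
    have hlt : f t < f t₀ := by
      rw [f_eq ht, f_eq t0mem]
      exact Real.rpow_lt_rpow (gg_nonneg ht) (gg_lt ht hne) (by norm_num)
    exact absurd heq hlt.ne
  · rw [f_eq t0mem]
    -- numeric bounds
    have h0 : (0:ℝ) ≤ t₀ := by linarith [t0mem.1]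
    set X := t₀ ^ ((4:ℝ)/3) with hX
    have hX3 : X ^ 3 = t₀ ^ 4 := by
      rw [hX, rpow_npow h0, show ((4:ℝ)/3 * (3:ℕ)) = ((4:ℕ):ℝ) by push_cast; ring,
        Real.rpow_natCast]
    have hX0 : 0 ≤ X := Real.rpow_nonneg h0 _
    have htl := t0_lb
    have htu := t0_ub
    have hXlb : (82778280:ℝ)/100000000 < X := by
      apply lt_of_pow_lt_pow_left₀ 3 hX0
      rw [hX3]
      calc ((82778280:ℝ)/100000000) ^ 3 < ((156210350:ℝ)/180000000) ^ 4 := by norm_num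
        _ ≤ t₀ ^ 4 := pow_le_pow_left₀ (by norm_num) htl 4
    have hXub : X < (82778282:ℝ)/100000000 := by
      apply lt_of_pow_lt_pow_left₀ 3 (by norm_num)
      rw [hX3]
      calc t₀ ^ 4 ≤ ((156210351:ℝ)/180000000) ^ 4 := pow_le_pow_left₀ h0 htu 4
        _ < ((82778282:ℝ)/100000000) ^ 3 := by norm_num
    set v := 4*(t₀ - t₀^2) with hv
    have hv_lb : (458788817:ℝ)/1000000000 ≤ v := by
      rw [hv]
      nlinarith [mul_nonneg (by linarith : (0:ℝ) ≤ t₀ - 156210350/180000000)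
        (by linarith : (0:ℝ) ≤ 156210351/180000000 - t₀)]
    have hv_ub : v ≤ (458788834:ℝ)/1000000000 := by
      rw [hv]
      nlinarith [mul_nonneg (by linarith : (0:ℝ) ≤ t₀ - 156210350/180000000)
        (by linarith : (0:ℝ) ≤ 156210351/180000000 - t₀)]
    have hv0 : (0:ℝ) ≤ v := by linarith
    set Y := v ^ ((2:ℝ)/3) with hY
    have hY3 : Y ^ 3 = v ^ 2 := by
      rw [hY, rpow_npow hv0, show ((2:ℝ)/3 * (3:ℕ)) = ((2:ℕ):ℝ) by push_cast; ring,
        Real.rpow_natCast]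
    have hY0 : 0 ≤ Y := Real.rpow_nonneg hv0 _
    have hYlb : (59485148:ℝ)/100000000 < Y := by
      apply lt_of_pow_lt_pow_left₀ 3 hY0
      rw [hY3]
      calc ((59485148:ℝ)/100000000) ^ 3 < ((458788817:ℝ)/1000000000) ^ 2 := by norm_num
        _ ≤ v ^ 2 := pow_le_pow_left₀ (by norm_num) hv_lb 2
    have hYub : Y < (59485151:ℝ)/100000000 := by
      apply lt_of_pow_lt_pow_left₀ 3 (by norm_num)
      rw [hY3]
      calc v ^ 2 ≤ ((458788834:ℝ)/1000000000) ^ 2 := pow_le_pow_left₀ hv0 hv_ub 2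
        _ < ((59485151:ℝ)/100000000) ^ 3 := by norm_num
    have hgg : gg t₀ = 2 * X + Y := by rw [hX, hY, hv]; rfl
    have hg_lb : (225041708:ℝ)/100000000 < gg t₀ := by rw [hgg]; linarith
    have hg_ub : gg t₀ < (225041715:ℝ)/100000000 := by rw [hgg]; linarith
    have hg0 : (0:ℝ) ≤ gg t₀ := by linarith
    set Z := gg t₀ ^ ((3:ℝ)/4) with hZ
    have hZ4 : Z ^ 4 = gg t₀ ^ 3 := by
      rw [hZ, rpow_npow hg0, show ((3:ℝ)/4 * (4:ℕ)) = ((3:ℕ):ℝ) by push_cast; ring,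
        Real.rpow_natCast]
    have hZ0 : 0 ≤ Z := Real.rpow_nonneg hg0 _
    constructor
    · apply lt_of_pow_lt_pow_left₀ 4 hZ0
      rw [hZ4]
      calc (1.8373:ℝ) ^ 4 < ((225041708:ℝ)/100000000) ^ 3 := by norm_num
        _ ≤ gg t₀ ^ 3 := pow_le_pow_left₀ (by norm_num) hg_lb.le 3
    · apply lt_of_pow_lt_pow_left₀ 4 (by norm_num)
      rw [hZ4]
      calc gg t₀ ^ 3 ≤ ((225041715:ℝ)/100000000) ^ 3 := pow_le_pow_left₀ hg0 hg_ub.le 3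
        _ < (1.8374:ℝ) ^ 4 := by norm_num
end

section
/- For −2 ≤ λ ≤ −(2√5)/3, with x₀ = √((−3λ − √(9λ²−20))/10) and x₁ = √((−3λ + √(9λ²−20))/10), one has |q_λ(x₀)| ≥ |q_λ(x₁)| where q_λ(x) = x⁵ + λx³ + x. -/
set_option maxHeartbeats 1000000 in
theorem stmt15 (l : ℝ) (h1 : -2 ≤ l) (h2 : l ≤ -(2 * Real.sqrt 5) / 3) :
    let x₀ := Real.sqrt ((-(3*l) - Real.sqrt (9*l^2 - 20)) / 10)
    let x₁ := Real.sqrt ((-(3*l) + Real.sqrt (9*l^2 - 20)) / 10)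
    |x₁^5 + l * x₁^3 + x₁| ≤ |x₀^5 + l * x₀^3 + x₀| := by
  intro x₀ x₁
  have hx0d : x₀ = Real.sqrt ((-(3*l) - Real.sqrt (9*l^2 - 20)) / 10) := rfl
  have hx1d : x₁ = Real.sqrt ((-(3*l) + Real.sqrt (9*l^2 - 20)) / 10) := rfl
  clear_value x₀ x₁
  have h5 : (Real.sqrt 5)^2 = 5 := Real.sq_sqrt (by norm_num)
  have h5n : (0:ℝ) ≤ Real.sqrt 5 := Real.sqrt_nonneg 5
  have h5ge : (2:ℝ) ≤ Real.sqrt 5 := by nlinarith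
  have hl0 : l < 0 := by nlinarith
  have h20 : (20:ℝ) ≤ 9*l^2 := by nlinarith
  have hl4 : l^2 ≤ 4 := by nlinarith
  set s := Real.sqrt (9*l^2 - 20) with hs_def
  have hs0 : 0 ≤ s := Real.sqrt_nonneg _
  have hs : s^2 = 9*l^2 - 20 := Real.sq_sqrt (by linarith)
  clear_value s
  have hsle : s ≤ -(3*l) := by nlinarith
  have h0n : 0 ≤ (-(3*l) - s) / 10 := by linarith
  have h1n : 0 ≤ (-(3*l) + s) / 10 := by linarith
  have hx0sq : x₀^2 = (-(3*l) - s) / 10 := by rw [hx0d]; exact Real.sq_sqrt h0n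
  have hx1sq : x₁^2 = (-(3*l) + s) / 10 := by rw [hx1d]; exact Real.sq_sqrt h1n
  have hx00 : 0 ≤ x₀ := hx0d ▸ Real.sqrt_nonneg _
  have hx10 : 0 ≤ x₁ := hx1d ▸ Real.sqrt_nonneg _
  have hA : 0 ≤ 20 - 3*l^2 - l*s := by nlinarith
  have hB : 0 ≤ 20 - 3*l^2 + l*s := by nlinarith
  have e0 : x₀^5 + l*x₀^3 + x₀ = x₀ * (20 - 3*l^2 - l*s) / 25 := by
    rw [show x₀^5 + l*x₀^3 + x₀ = x₀*((x₀^2)^2 + l*(x₀^2) + 1) from by ring, hx0sq]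
    linear_combination (x₀/100) * hs
  have e1 : x₁^5 + l*x₁^3 + x₁ = x₁ * (20 - 3*l^2 + l*s) / 25 := by
    rw [show x₁^5 + l*x₁^3 + x₁ = x₁*((x₁^2)^2 + l*(x₁^2) + 1) from by ring, hx1sq]
    linear_combination (x₁/100) * hs
  have hkey : (x₁ * (20 - 3*l^2 + l*s))^2 ≤ (x₀ * (20 - 3*l^2 - l*s))^2 := by
    have e2 : (x₀ * (20 - 3*l^2 - l*s))^2 = ((-(3*l) - s)/10) * (20 - 3*l^2 - l*s)^2 := by
      rw [mul_pow, hx0sq]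
    have e3 : (x₁ * (20 - 3*l^2 + l*s))^2 = ((-(3*l) + s)/10) * (20 - 3*l^2 + l*s)^2 := by
      rw [mul_pow, hx1sq]
    have hD : ((-(3*l) - s)/10) * (20 - 3*l^2 - l*s)^2 - ((-(3*l) + s)/10) * (20 - 3*l^2 + l*s)^2
        = (4/5) * s * ((9*l^2 - 20) * (5 - l^2)) := by
      linear_combination (-(l^2*s)/5) * hs
    have hT : 0 ≤ (4/5) * s * ((9*l^2 - 20) * (5 - l^2)) := by
      exact mul_nonneg (mul_nonneg (by norm_num) hs0)
        (mul_nonneg (by linarith) (by nlinarith))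
    rw [e2, e3]
    linarith [hD, hT]
  have hmain : x₁ * (20 - 3*l^2 + l*s) ≤ x₀ * (20 - 3*l^2 - l*s) := by
    have h := Real.sqrt_le_sqrt hkey
    rwa [Real.sqrt_sq (mul_nonneg hx10 hB), Real.sqrt_sq (mul_nonneg hx00 hA)] at h
  rw [e0, e1, abs_of_nonneg (div_nonneg (mul_nonneg hx10 hB) (by norm_num)),
    abs_of_nonneg (div_nonneg (mul_nonneg hx00 hA) (by norm_num))]
  linarith
end

section
/- If λ ≤ −(2√5)/3 then sup_{(x,y)∈[−1,1]²} |x⁵y + λx³y³ + xy⁵| = max{|2 + λ|, |q_λ(x₀)|}, where x₀ = √((−3λ − √(9λ²−20))/10) and q_λ(x) = x⁵ + λx³ + x; if λ > −(2√5)/3 the sup norm equals |2 + λ|. -/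
private lemma claimC (a t : ℝ) (ha : 0 < a) (ht : 0 ≤ t) (h1 : 5*a^2*t^2 ≤ 1) (h2 : 5*a^4 ≤ 1) :
    0 ≤ -3*a^2*t^3 - 6*a^3*t^2 + (1-4*a^4)*t + 2*a*(1-a^4) := by
  nlinarith [mul_nonneg ht (sub_nonneg.2 h1), mul_nonneg ha.le (sub_nonneg.2 h2),
    sq_nonneg (a-t), sq_nonneg (a+t), mul_nonneg (mul_nonneg ha.le ht) (sub_nonneg.2 h1),
    mul_nonneg (mul_nonneg ha.le ha.le) (sub_nonneg.2 h2),
    mul_nonneg (mul_nonneg ht ht) (sub_nonneg.2 h2),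
    mul_nonneg (sq_nonneg (a-t)) ha.le, mul_nonneg (sq_nonneg (a-t)) ht]

private lemma claimR (a t : ℝ) (ha : 0 < a) (ht : 0 ≤ t) (ht1 : t ≤ 1) (h1 : 1 ≤ 5*a^2*t^2)
    (h2 : 5*a^4 ≤ 1) :
    0 ≤ 3*a^2*t^4 + 3*a^2*t^3 + (3*a^2-5*a^4-1)*(t^2+t) + 6*a^2-5*a^4-1 := by
  nlinarith [mul_nonneg (sub_nonneg.2 ht1) (sub_nonneg.2 h1),
    mul_nonneg (sub_nonneg.2 h2) (sub_nonneg.2 ht1),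
    mul_nonneg (mul_nonneg ht (sub_nonneg.2 ht1)) (sub_nonneg.2 h1),
    mul_nonneg ht (sub_nonneg.2 h1), sub_nonneg.2 h1, sq_nonneg (1-t),
    mul_nonneg (sq_nonneg (1-t)) (sub_nonneg.2 h2),
    mul_nonneg (sq_nonneg (1-t)) (mul_pos ha ha).le,
    mul_pos ha ha, sq_nonneg (5*a^2-1), mul_nonneg (sub_nonneg.2 h2) ht]

/-- Pointwise bound on `[0,1]` in the case of a real critical point `a`. -/
private lemma bound1 (l a t : ℝ) (ha : 0 < a) (hcrit : 5*a^4 + 3*l*a^2 + 1 = 0)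
    (h2 : 5*a^4 ≤ 1) (ht : 0 ≤ t) (ht1 : t ≤ 1) :
    |t^5 + l*t^3 + t| ≤ max |2+l| (a^5 + l*a^3 + a) := by
  have hmax0 : (0:ℝ) ≤ max |2+l| (a^5 + l*a^3 + a) :=
    le_trans (abs_nonneg _) (le_max_left _ _)
  rw [abs_le]
  constructor
  · -- lower bound
    rcases le_or_gt (-2 : ℝ) l with hl | hl
    · have hq : 0 ≤ t^5 + l*t^3 + t := by
        nlinarith [mul_nonneg ht (sq_nonneg (t^2-1)),
          mul_nonneg (mul_nonneg (mul_nonneg ht ht) ht) (by linarith : (0:ℝ) ≤ l + 2)]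
      linarith
    · have hg : t^4+t^3+t^2+t+2 + l*(t^2+t+1) ≤ 0 := by
        nlinarith [mul_nonneg (mul_nonneg ht (by linarith : (0:ℝ) ≤ 1-t)) (sq_nonneg (t+1)),
          mul_nonneg (by linarith : (0:ℝ) ≤ -(l+2)) (by positivity : (0:ℝ) ≤ t^2+t+1)]
      have h3 : (2+l) ≤ t^5 + l*t^3 + t := by
        nlinarith [mul_nonneg (by linarith : (0:ℝ) ≤ 1-t) (by linarith : (0:ℝ) ≤ -(t^4+t^3+t^2+t+2 + l*(t^2+t+1)))]
      have h4 : -|2+l| ≤ 2+l := neg_abs_le _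
      have h5 : |2+l| ≤ max |2+l| (a^5 + l*a^3 + a) := le_max_left _ _
      linarith
  · -- upper bound
    rcases le_or_gt (5*a^2*t^2) 1 with h1 | h1
    · refine le_trans ?_ (le_max_right _ _)
      have hP := claimC a t ha ht h1 h2
      have h3 : 3*a^2*((a^5+l*a^3+a) - (t^5+l*t^3+t))
          = (t-a)^2 * (-3*a^2*t^3 - 6*a^3*t^2 + (1-4*a^4)*t + 2*a*(1-a^4)) := by
        linear_combination (a^3 - t^3) * hcrit
      nlinarith [h3, mul_nonneg (sq_nonneg (t-a)) hP, mul_pos ha ha]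
    · refine le_trans ?_ (le_trans (le_abs_self _) (le_max_left _ _))
      have hR := claimR a t ha ht ht1 h1.le h2
      have hK : 0 ≤ 6*a^2 - 5*a^4 - 1 - 3*a^2*t^5 + (5*a^4+1)*t^3 - 3*a^2*t := by
        nlinarith [mul_nonneg (by linarith : (0:ℝ) ≤ 1-t) hR]
      have h3 : 3*a^2*((2+l) - (t^5+l*t^3+t))
          = 6*a^2 - 5*a^4 - 1 - 3*a^2*t^5 + (5*a^4+1)*t^3 - 3*a^2*t := by
        linear_combination (1 - t^3) * hcrit
      nlinarith [h3, hK, mul_pos ha ha]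

/-- Pointwise bound on `[0,1]` when `l ≥ -(2√5)/3`. -/
private lemma bound2 (l t : ℝ) (hl : -(2 * Real.sqrt 5) / 3 ≤ l) (ht : 0 ≤ t) (ht1 : t ≤ 1) :
    |t^5 + l*t^3 + t| ≤ |2+l| := by
  have hs5 : (Real.sqrt 5)^2 = 5 := Real.sq_sqrt (by norm_num)
  have hs5n : 0 ≤ Real.sqrt 5 := Real.sqrt_nonneg 5
  have hs52 : Real.sqrt 5 ≤ 9/4 := by nlinarith
  have hl' : -(3:ℝ)/2 ≤ l := by linarith
  have h2l : (0:ℝ) < 2 + l := by linarith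
  rw [abs_of_pos h2l, abs_le]
  constructor
  · have hq : 0 ≤ t^5 + l*t^3 + t := by
      nlinarith [mul_nonneg ht (sq_nonneg (t^2 - 3/4)),
        mul_nonneg (mul_nonneg (mul_nonneg ht ht) ht) (by linarith : (0:ℝ) ≤ l + 3/2)]
    linarith
  · have hb : 0 ≤ t^4+t^3+t^2+t+2 + l*(t^2+t+1) := by
      nlinarith [mul_nonneg (by linarith : (0:ℝ) ≤ l + 2*Real.sqrt 5/3)
          (by positivity : (0:ℝ) ≤ t^2+t+1),
        mul_nonneg ht (sq_nonneg (t - 1/2)), sq_nonneg (t^2 - 1/2),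
        mul_nonneg (mul_nonneg ht ht) (sq_nonneg (t-1)), ht, ht1,
        mul_nonneg (mul_nonneg ht ht) ht]
    nlinarith [mul_nonneg (by linarith : (0:ℝ) ≤ 1-t) hb]

/-- Reduction from the square to the segment. -/
private lemma reduce_half (l M : ℝ) (hM : ∀ t : ℝ, 0 ≤ t → t ≤ 1 → |t^5 + l*t^3 + t| ≤ M)
    (x y : ℝ) (hx : |x| ≤ 1) (hyx : |y| ≤ |x|) :
    |x^5 * y + l * x^3 * y^3 + x * y^5| ≤ M := by
  rcases eq_or_ne x 0 with rfl | hx0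
  · have h := hM 0 le_rfl zero_le_one
    rw [show (0:ℝ)^5 + l * 0^3 + 0 = 0 by ring, abs_zero] at h
    rw [show (0:ℝ)^5 * y + l * 0^3 * y^3 + 0 * y^5 = 0 by ring, abs_zero]
    exact h
  · set w := y / x with hw
    have hQ : x^5 * y + l * x^3 * y^3 + x * y^5 = x^6 * (w^5 + l*w^3 + w) := by
      rw [hw]
      field_simp
      ring
    have hw1 : |w| ≤ 1 := by
      rw [hw, abs_div, div_le_one (abs_pos.2 hx0)]
      exact hyx
    have hqw : |w^5 + l*w^3 + w| ≤ M := by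
      rcases le_or_gt 0 w with h | h
      · exact hM w h (by rwa [abs_of_nonneg h] at hw1)
      · have h1 : -w ≤ 1 := by rwa [abs_of_neg h] at hw1
        have := hM (-w) (by linarith) h1
        have heq : |(-w)^5 + l*(-w)^3 + (-w)| = |w^5 + l*w^3 + w| := by
          rw [show (-w)^5 + l*(-w)^3 + (-w) = -(w^5 + l*w^3 + w) by ring, abs_neg]
        rwa [heq] at this
    have hx6 : |x^6| ≤ 1 := by
      rw [abs_pow]
      exact pow_le_one₀ (abs_nonneg x) hx
    calc |x^5 * y + l * x^3 * y^3 + x * y^5| = |x^6| * |w^5 + l*w^3 + w| := by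
          rw [hQ, abs_mul]
      _ ≤ 1 * M := mul_le_mul hx6 hqw (abs_nonneg _) zero_le_one
      _ = M := one_mul M

private lemma reduce (l M : ℝ) (hM : ∀ t : ℝ, 0 ≤ t → t ≤ 1 → |t^5 + l*t^3 + t| ≤ M)
    (x y : ℝ) (hx : |x| ≤ 1) (hy : |y| ≤ 1) :
    |x^5 * y + l * x^3 * y^3 + x * y^5| ≤ M := by
  rcases le_total |y| |x| with h | h
  · exact reduce_half l M hM x y hx h
  · have := reduce_half l M hM y x hy h
    have heq : |y^5 * x + l * y^3 * x^3 + y * x^5| = |x^5 * y + l * x^3 * y^3 + x * y^5| := by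
      congr 1; ring
    rwa [heq] at this

private lemma sup_eq (l M : ℝ) (hM : ∀ t : ℝ, 0 ≤ t → t ≤ 1 → |t^5 + l*t^3 + t| ≤ M)
    (hmem : M ∈ {r : ℝ | ∃ x y : ℝ, |x| ≤ 1 ∧ |y| ≤ 1 ∧
      r = |x^5 * y + l * x^3 * y^3 + x * y^5|}) :
    sSup {r : ℝ | ∃ x y : ℝ, |x| ≤ 1 ∧ |y| ≤ 1 ∧
      r = |x^5 * y + l * x^3 * y^3 + x * y^5|} = M := by
  have hub : ∀ r ∈ {r : ℝ | ∃ x y : ℝ, |x| ≤ 1 ∧ |y| ≤ 1 ∧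
      r = |x^5 * y + l * x^3 * y^3 + x * y^5|}, r ≤ M := by
    rintro r ⟨x, y, hx, hy, rfl⟩
    exact reduce l M hM x y hx hy
  exact le_antisymm (csSup_le ⟨M, hmem⟩ hub) (le_csSup ⟨M, hub⟩ hmem)

/-- Supremum of `|x⁵y + λx³y³ + xy⁵|` over the unit square `[-1,1]²`. -/
noncomputable def supQ (l : ℝ) : ℝ :=
  sSup {r : ℝ | ∃ x y : ℝ, |x| ≤ 1 ∧ |y| ≤ 1 ∧
    r = |x^5 * y + l * x^3 * y^3 + x * y^5|}

theorem stmt17 (l : ℝ) :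
    (l ≤ -(2 * Real.sqrt 5) / 3 →
      supQ l = max |2 + l|
        |(Real.sqrt ((-(3*l) - Real.sqrt (9*l^2 - 20)) / 10))^5
          + l * (Real.sqrt ((-(3*l) - Real.sqrt (9*l^2 - 20)) / 10))^3
          + Real.sqrt ((-(3*l) - Real.sqrt (9*l^2 - 20)) / 10)|) ∧
    (l > -(2 * Real.sqrt 5) / 3 → supQ l = |2 + l|) := by
  unfold supQ
  have hs5 : (Real.sqrt 5)^2 = 5 := Real.sq_sqrt (by norm_num)
  have hs5n : 0 ≤ Real.sqrt 5 := Real.sqrt_nonneg 5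
  constructor
  · intro hl
    have hlneg : l < 0 := by nlinarith
    have h920 : 0 ≤ 9*l^2 - 20 := by nlinarith
    set s := Real.sqrt (9*l^2 - 20) with hsdef
    have hs : s^2 = 9*l^2 - 20 := Real.sq_sqrt h920
    have hs0 : 0 ≤ s := Real.sqrt_nonneg _
    have hslt : s < -(3*l) := by nlinarith
    have hu : 0 < (-(3*l) - s) / 10 := by linarith
    set a := Real.sqrt ((-(3*l) - s) / 10) with hadef
    have ha : 0 < a := Real.sqrt_pos.2 hu
    have ha2 : a^2 = (-(3*l) - s) / 10 := Real.sq_sqrt hu.le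
    have ha4 : a^4 = ((-(3*l) - s) / 10)^2 := by rw [show a^4 = (a^2)^2 by ring, ha2]
    have hcrit : 5*a^4 + 3*l*a^2 + 1 = 0 := by
      rw [ha4, ha2]
      linear_combination (1/20) * hs
    have h2 : 5*a^4 ≤ 1 := by
      rw [ha4]
      nlinarith [mul_nonneg hs0 (by linarith : (0:ℝ) ≤ -(3*l) - s)]
    have haa : a^2 ≤ 1 := by nlinarith
    have ha1 : a ≤ 1 := by nlinarith
    have hqa : 0 ≤ a^5 + l*a^3 + a := by
      have hid : 3*a^2*(a^5 + l*a^3 + a) = 2*a^3*(1-a^4) + a^3*(5*a^4 + 3*l*a^2 + 1) := by ring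
      nlinarith [hid, hcrit, mul_pos ha ha,
        mul_nonneg (mul_nonneg (mul_nonneg ha.le ha.le) ha.le) (by nlinarith : (0:ℝ) ≤ 1 - a^4)]
    rw [abs_of_nonneg hqa]
    have hpt : ∀ t : ℝ, 0 ≤ t → t ≤ 1 →
        |t^5 + l*t^3 + t| ≤ max |2+l| (a^5 + l*a^3 + a) := fun t ht ht1 =>
      bound1 l a t ha hcrit h2 ht ht1
    have hmem : max |2+l| (a^5 + l*a^3 + a) ∈ {r : ℝ | ∃ x y : ℝ, |x| ≤ 1 ∧ |y| ≤ 1 ∧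
        r = |x^5 * y + l * x^3 * y^3 + x * y^5|} := by
      rcases le_total (a^5 + l*a^3 + a) |2+l| with h | h
      · refine ⟨1, 1, by norm_num, by norm_num, ?_⟩
        rw [max_eq_left h]
        congr 1
        ring
      · refine ⟨a, 1, by rw [abs_of_nonneg ha.le]; exact ha1, by norm_num, ?_⟩
        rw [max_eq_right h,
          show a^5 * 1 + l * a^3 * 1^3 + a * 1^5 = a^5 + l*a^3 + a by ring,
          abs_of_nonneg hqa]
    exact sup_eq l _ hpt hmem
  · intro hl
    have hpt : ∀ t : ℝ, 0 ≤ t → t ≤ 1 → |t^5 + l*t^3 + t| ≤ |2+l| := fun t ht ht1 =>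
      bound2 l t (le_of_lt hl) ht ht1
    have hmem : |2+l| ∈ {r : ℝ | ∃ x y : ℝ, |x| ≤ 1 ∧ |y| ≤ 1 ∧
        r = |x^5 * y + l * x^3 * y^3 + x * y^5|} := by
      refine ⟨1, 1, by norm_num, by norm_num, ?_⟩
      congr 1
      ring
    exact sup_eq l _ hpt hmem
end
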